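/- arXiv:2112.05618 — 5 statements merged into one kernel-verified Lean document; each statement's English description precedes it below -/
import Mathlib

section
/- Let Q(x_1,...,x_m) = Σ_{I ⊆ {1,...,m}, #I = k} δ_I · Π_{i∈I} x_i be a multilinear homogeneous polynomial of degree k ≤ m over the finite field F_q, with not all coefficients δ_I zero. If Z ⊆ F_q^m is the set of zeros of Q, then #Z ≤ q^{m-k}·(q^k − (q−1)^k). -/
open Finset

/-- Core lemma: a multilinear polynomial supported on subsets of `s`, whose
coefficient at `s` is nonzero, is nonzero at at least `(q-1)^#s` points in each
"fiber" of assignments agreeing with `z` off `s`. -/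
lemma multilinear_nonzero_count {F : Type} [Field F] [Fintype F] [DecidableEq F] {m : ℕ}
    (s : Finset (Fin m)) :
    ∀ (c : Finset (Fin m) → F), c s ≠ 0 → ∀ z : Fin m → F,
    (Fintype.card F - 1) ^ s.card ≤
      (Finset.univ.filter (fun y : Fin m → F =>
        (∀ i ∉ s, y i = z i) ∧ ∑ I ∈ s.powerset, c I * ∏ i ∈ I, y i ≠ 0)).card := by
  induction s using Finset.induction_on with
  | empty =>
      intro c hc z
      simp only [Finset.card_empty, pow_zero]
      exact Finset.card_pos.mpr ⟨z, by simp [hc]⟩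
  | @insert a s ha ih =>
      intro c hc z
      set A : (Fin m → F) → F := fun y => ∑ J ∈ s.powerset, c (insert a J) * ∏ i ∈ J, y i with hA
      set B : (Fin m → F) → F := fun y => ∑ J ∈ s.powerset, c J * ∏ i ∈ J, y i with hB
      have key : ∀ y : Fin m → F,
          ∑ I ∈ (insert a s).powerset, c I * ∏ i ∈ I, y i = y a * A y + B y := by
        intro y
        rw [Finset.sum_powerset_insert ha]
        rw [hA, hB, Finset.mul_sum]
        rw [add_comm]
        congr 1
        refine Finset.sum_congr rfl fun J hJ => ?_
        have haJ : a ∉ J := fun h => ha (Finset.mem_powerset.mp hJ h)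
        rw [Finset.prod_insert haJ]; ring
      -- G : good points for A
      set G := Finset.univ.filter (fun y : Fin m → F =>
        (∀ i ∉ s, y i = z i) ∧ ∑ J ∈ s.powerset, (fun J => c (insert a J)) J * ∏ i ∈ J, y i ≠ 0)
        with hG
      have hGcard : (Fintype.card F - 1) ^ s.card ≤ G.card := ih (fun J => c (insert a J)) hc z
      have hAG : ∀ y ∈ G, A y ≠ 0 ∧ ∀ i ∉ s, y i = z i := by
        intro y hy
        rw [hG, Finset.mem_filter] at hy
        exact ⟨hy.2.2, hy.2.1⟩
      set T : (Fin m → F) → Finset F := fun y =>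
        Finset.univ.filter (fun t : F => t * A y + B y ≠ 0) with hT
      have hTcard : ∀ y : Fin m → F, A y ≠ 0 → Fintype.card F - 1 ≤ (T y).card := by
        intro y hAy
        have hroots : (Finset.univ.filter (fun t : F => t * A y + B y = 0)).card ≤ 1 := by
          rw [Finset.card_le_one]
          intro t ht t' ht'
          rw [Finset.mem_filter] at ht ht'
          have : t * A y = t' * A y := by
            have := ht.2; have := ht'.2
            linear_combination ht.2 - ht'.2
          exact mul_right_cancel₀ hAy this
        have : T y = Finset.univ \ Finset.univ.filter (fun t : F => t * A y + B y = 0) := by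
          rw [hT]; exact Finset.filter_not _ _
        rw [this, Finset.card_sdiff_of_subset (Finset.filter_subset _ _), Finset.card_univ]
        exact Nat.sub_le_sub_left hroots _
      -- update invariance
      have hupd : ∀ (y : Fin m → F) (t : F), A (Function.update y a t) = A y ∧
          B (Function.update y a t) = B y := by
        intro y t
        constructor <;>
        · refine Finset.sum_congr rfl fun J hJ => ?_
          have haJ : a ∉ J := fun h => ha (Finset.mem_powerset.mp hJ h)
          congr 1
          exact Finset.prod_congr rfl fun i hi => Function.update_of_ne (by rintro rfl; exact haJ hi) _ _
      set S := G.biUnion (fun y => (T y).image (fun t => Function.update y a t)) with hS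
      have hSsub : S ⊆ Finset.univ.filter (fun y : Fin m → F =>
          (∀ i ∉ insert a s, y i = z i) ∧
            ∑ I ∈ (insert a s).powerset, c I * ∏ i ∈ I, y i ≠ 0) := by
        intro x hx
        rw [hS, Finset.mem_biUnion] at hx
        obtain ⟨y, hyG, hx⟩ := hx
        rw [Finset.mem_image] at hx
        obtain ⟨t, htT, rfl⟩ := hx
        rw [Finset.mem_filter]
        obtain ⟨hAy, hyz⟩ := hAG y hyG
        refine ⟨Finset.mem_univ _, ?_, ?_⟩
        · intro i hi
          rw [Finset.mem_insert, not_or] at hi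
          rw [Function.update_of_ne hi.1]
          exact hyz i hi.2
        · rw [key, (hupd y t).1, (hupd y t).2, Function.update_self]
          rw [hT, Finset.mem_filter] at htT
          exact htT.2
      have hdisj : ∀ y₁ ∈ G, ∀ y₂ ∈ G, y₁ ≠ y₂ →
          Disjoint ((T y₁).image (fun t => Function.update y₁ a t))
            ((T y₂).image (fun t => Function.update y₂ a t)) := by
        intro y₁ hy₁ y₂ hy₂ hne
        rw [Finset.disjoint_left]
        rintro x hx1 hx2
        rw [Finset.mem_image] at hx1 hx2
        obtain ⟨t₁, _, rfl⟩ := hx1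
        obtain ⟨t₂, _, heq⟩ := hx2
        apply hne
        funext i
        by_cases hia : i = a
        · subst hia
          rw [(hAG y₁ hy₁).2 i ha, (hAG y₂ hy₂).2 i ha]
        · have := congrFun heq i
          rw [Function.update_of_ne hia, Function.update_of_ne hia] at this
          exact this.symm
      have hScard : (Fintype.card F - 1) ^ s.card * (Fintype.card F - 1) ≤ S.card := by
        rw [hS, Finset.card_biUnion hdisj]
        calc (Fintype.card F - 1) ^ s.card * (Fintype.card F - 1)
            ≤ G.card * (Fintype.card F - 1) := Nat.mul_le_mul_right _ hGcard
          _ = ∑ _y ∈ G, (Fintype.card F - 1) := by rw [Finset.sum_const, smul_eq_mul, mul_comm]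
          _ ≤ ∑ y ∈ G, ((T y).image (fun t => Function.update y a t)).card := by
              refine Finset.sum_le_sum fun y hy => ?_
              rw [Finset.card_image_of_injective _ ?_]
              · exact hTcard y (hAG y hy).1
              · intro t t' h
                simpa using congrFun h a
      calc (Fintype.card F - 1) ^ (insert a s).card
          = (Fintype.card F - 1) ^ s.card * (Fintype.card F - 1) := by
            rw [Finset.card_insert_of_notMem ha, pow_succ]
        _ ≤ S.card := hScard
        _ ≤ _ := Finset.card_le_card hSsub

/-- Upper bound on the number of zeros of a nonzero multilinear homogeneous
polynomial of degree `k ≤ m` over a finite field with `q` elements: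
`#Z ≤ q^(m-k) * (q^k - (q-1)^k)`. -/
theorem zero_set_upper_bound (F : Type) [Field F] [Fintype F] [DecidableEq F]
    (q : ℕ) (hq : q = Fintype.card F)
    (m k : ℕ) (hk : 1 ≤ k) (hkm : k ≤ m)
    (δ : Finset (Fin m) → F)
    (hδ : ∃ I : Finset (Fin m), I.card = k ∧ δ I ≠ 0) :
    (Finset.univ.filter (fun y : Fin m → F =>
        ∑ I ∈ Finset.univ.filter (fun I : Finset (Fin m) => I.card = k),
          δ I * ∏ i ∈ I, y i = 0)).card
      ≤ q ^ (m - k) * (q ^ k - (q - 1) ^ k) := by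
  subst hq
  obtain ⟨I0, hI0k, hI0⟩ := hδ
  set Qp : (Fin m → F) → F := fun y =>
    ∑ I ∈ Finset.univ.filter (fun I : Finset (Fin m) => I.card = k), δ I * ∏ i ∈ I, y i
    with hQp
  set Z := Finset.univ.filter (fun y : Fin m → F => Qp y = 0) with hZ
  set NZ := Finset.univ.filter (fun y : Fin m → F => ¬ Qp y = 0) with hNZ
  have htot : Z.card + NZ.card = Fintype.card F ^ m := by
    rw [hZ, hNZ, Finset.card_filter_add_card_filter_not, Finset.card_univ,
      Fintype.card_fun, Fintype.card_fin]
  set R := Finset.univ.filter (fun z : Fin m → F => ∀ i ∈ I0, z i = 0) with hR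
  have hRcard : R.card = Fintype.card F ^ (m - k) := by
    rw [hR, ← Fintype.card_subtype]
    have e : {z : Fin m → F // ∀ i ∈ I0, z i = 0} ≃ (↥(I0ᶜ : Finset (Fin m)) → F) :=
      { toFun := fun z i => z.1 i
        invFun := fun f => ⟨fun i => if h : i ∈ I0 then 0 else f ⟨i, by simpa using h⟩,
          fun i hi => dif_pos hi⟩
        left_inv := fun z => Subtype.ext (funext fun i => by
          by_cases h : i ∈ I0
          · simp [h, z.2 i h]
          · simp [h])
        right_inv := fun f => funext fun i => by
          have hi : i.1 ∉ I0 := Finset.mem_compl.mp i.2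
          simp [hi] }
    rw [Fintype.card_congr e, Fintype.card_fun, Fintype.card_coe, Finset.card_compl,
      Fintype.card_fin, hI0k]
  -- coefficients of the restricted polynomial
  set cz : (Fin m → F) → Finset (Fin m) → F := fun z I =>
    ∑ K ∈ (Finset.univ.filter (fun K : Finset (Fin m) => K.card = k)).filter
        (fun K => K ∩ I0 = I), δ K * ∏ i ∈ K \ I0, z i
    with hcz
  have hczI0 : ∀ z : Fin m → F, cz z I0 = δ I0 := by
    intro z
    have hfib : (Finset.univ.filter (fun K : Finset (Fin m) => K.card = k)).filter
        (fun K => K ∩ I0 = I0) = {I0} := by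
      ext K
      simp only [Finset.mem_filter, Finset.mem_univ, true_and, Finset.mem_singleton,
        Finset.inter_eq_right]
      constructor
      · rintro ⟨hKk, hsub⟩
        exact (Finset.eq_of_subset_of_card_le hsub (by rw [hKk, hI0k])).symm
      · rintro rfl
        exact ⟨hI0k, Finset.Subset.refl _⟩
    simp only [hcz]
    rw [hfib, Finset.sum_singleton, Finset.sdiff_self, Finset.prod_empty, mul_one]
  have hpoly : ∀ (z y : Fin m → F), (∀ i ∉ I0, y i = z i) →
      Qp y = ∑ I ∈ I0.powerset, cz z I * ∏ i ∈ I, y i := by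
    intro z y hyz
    simp only [hQp]
    rw [← Finset.sum_fiberwise_of_maps_to (g := fun K : Finset (Fin m) => K ∩ I0)
      (t := I0.powerset) (fun K _ => Finset.mem_powerset.mpr Finset.inter_subset_right)
      (fun K => δ K * ∏ i ∈ K, y i)]
    refine Finset.sum_congr rfl fun I hI => ?_
    simp only [hcz]
    rw [Finset.sum_mul]
    refine Finset.sum_congr rfl fun K hK => ?_
    rw [Finset.mem_filter] at hK
    have hKI : K ∩ I0 = I := hK.2
    have hsplit : ∏ i ∈ K, y i = (∏ i ∈ K ∩ I0, y i) * ∏ i ∈ K \ I0, y i := by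
      rw [← Finset.filter_mem_eq_inter, Finset.sdiff_eq_filter]
      exact (Finset.prod_filter_mul_prod_filter_not K (fun i => i ∈ I0) y).symm
    have hzy : ∏ i ∈ K \ I0, y i = ∏ i ∈ K \ I0, z i :=
      Finset.prod_congr rfl fun i hi => hyz i (Finset.mem_sdiff.mp hi).2
    rw [hsplit, hzy, hKI]; ring
  -- the good sets
  set Aset : (Fin m → F) → Finset (Fin m → F) := fun z =>
    Finset.univ.filter (fun y : Fin m → F =>
      (∀ i ∉ I0, y i = z i) ∧ ∑ I ∈ I0.powerset, cz z I * ∏ i ∈ I, y i ≠ 0)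
    with hAset
  have hAcard : ∀ z : Fin m → F, (Fintype.card F - 1) ^ k ≤ (Aset z).card := by
    intro z
    have := multilinear_nonzero_count I0 (cz z) (by rw [hczI0]; exact hI0) z
    rwa [hI0k] at this
  have hAsub : ∀ z : Fin m → F, Aset z ⊆ NZ := by
    intro z y hy
    rw [hAset, Finset.mem_filter] at hy
    rw [hNZ, Finset.mem_filter]
    exact ⟨Finset.mem_univ _, by rw [hpoly z y hy.2.1]; exact hy.2.2⟩
  have hdisj : ∀ z₁ ∈ R, ∀ z₂ ∈ R, z₁ ≠ z₂ → Disjoint (Aset z₁) (Aset z₂) := by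
    intro z₁ hz₁ z₂ hz₂ hne
    rw [Finset.disjoint_left]
    intro y hy1 hy2
    rw [hAset, Finset.mem_filter] at hy1 hy2
    rw [hR, Finset.mem_filter] at hz₁ hz₂
    apply hne
    funext i
    by_cases h : i ∈ I0
    · rw [hz₁.2 i h, hz₂.2 i h]
    · rw [← hy1.2.1 i h, ← hy2.2.1 i h]
  have hNZcard : Fintype.card F ^ (m - k) * (Fintype.card F - 1) ^ k ≤ NZ.card := by
    calc Fintype.card F ^ (m - k) * (Fintype.card F - 1) ^ k
        = ∑ _z ∈ R, (Fintype.card F - 1) ^ k := by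
          rw [Finset.sum_const, smul_eq_mul, hRcard]
      _ ≤ ∑ z ∈ R, (Aset z).card := Finset.sum_le_sum fun z _ => hAcard z
      _ = (R.biUnion Aset).card := (Finset.card_biUnion hdisj).symm
      _ ≤ NZ.card := Finset.card_le_card (Finset.biUnion_subset.mpr fun z _ => hAsub z)
  have h2 : Fintype.card F ^ m = Fintype.card F ^ (m - k) * Fintype.card F ^ k := by
    rw [← pow_add, Nat.sub_add_cancel hkm]
  rw [h2] at htot
  have hZeq : Z.card = Fintype.card F ^ (m - k) * Fintype.card F ^ k - NZ.card :=
    Nat.eq_sub_of_add_eq htot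
  rw [hZeq, Nat.mul_sub]
  exact Nat.sub_le_sub_left hNZcard _
end

section
/- Let Q(x_1,...,x_m) = Σ_{I ⊆ {1,...,m}, #I = k} δ_I · Π_{i∈I} x_i be a multilinear homogeneous polynomial of degree k ≤ m over F_q, with not all coefficients δ_I zero. If Z ⊆ F_q^m is the set of zeros of Q, then #Z ≥ q^{m-k}·(q−1)^{k-1}. -/
open Finset

set_option linter.unusedSectionVars false
set_option maxHeartbeats 1000000
variable {F : Type} [Field F] [Fintype F] [DecidableEq F] {m : ℕ}

def ev (s : Finset (Fin m)) (c : Finset (Fin m) → F) (y : Fin m → F) : F :=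
  ∑ T ∈ s.powerset, c T * ∏ i ∈ T, y i

def cls (s : Finset (Fin m)) (z : Fin m → F) : Finset (Fin m → F) :=
  univ.filter (fun y => ∀ i ∉ s, y i = z i)

lemma ev_congr {s : Finset (Fin m)} {c : Finset (Fin m) → F} {y y' : Fin m → F}
    (h : ∀ i ∈ s, y i = y' i) : ev s c y = ev s c y' := by
  unfold ev
  refine Finset.sum_congr rfl fun T hT => ?_
  rw [mem_powerset] at hT
  congr 1
  exact Finset.prod_congr rfl fun i hi => h i (hT hi)

lemma ev_insert {a : Fin m} {s : Finset (Fin m)} (ha : a ∉ s)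
    (c : Finset (Fin m) → F) (y : Fin m → F) :
    ev (insert a s) c y = y a * ev s (fun T => c (insert a T)) y + ev s c y := by
  unfold ev
  rw [Finset.powerset_insert, Finset.sum_union, Finset.sum_image, Finset.mul_sum, add_comm]
  · congr 1
    refine Finset.sum_congr rfl fun T hT => ?_
    rw [mem_powerset] at hT
    rw [Finset.prod_insert (fun h => ha (hT h))]
    ring
  · intro T hT U hU h
    rw [Finset.mem_coe, mem_powerset] at hT hU
    have h1 : (insert a T).erase a = (insert a U).erase a := by rw [h]
    rwa [Finset.erase_insert (fun h => ha (hT h)),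
      Finset.erase_insert (fun h => ha (hU h))] at h1
  · rw [Finset.disjoint_left]
    intro T hT hT2
    rw [mem_powerset] at hT
    rw [Finset.mem_image] at hT2
    obtain ⟨U, hU, rfl⟩ := hT2
    exact ha (hT (mem_insert_self a U))

lemma mem_cls {s : Finset (Fin m)} {z y : Fin m → F} :
    y ∈ cls s z ↔ ∀ i ∉ s, y i = z i := by simp [cls]

lemma fiber_count {a : Fin m} {s : Finset (Fin m)} (ha : a ∉ s)
    (z : Fin m → F) (Q : (Fin m → F) → Prop) [DecidablePred Q] :
    ((cls (insert a s) z).filter Q).card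
      = ∑ t : F, ((cls s (Function.update z a 0)).filter
          (fun y => Q (Function.update y a t))).card := by
  rw [Finset.card_eq_sum_card_fiberwise (f := fun y => y a) (t := univ) (fun x _ => mem_univ _)]
  refine Finset.sum_congr rfl fun t _ => ?_
  refine Finset.card_bij' (fun y _ => Function.update y a 0)
    (fun y _ => Function.update y a t) ?_ ?_ ?_ ?_
  · intro y hy
    simp only [mem_filter, mem_cls] at hy ⊢
    obtain ⟨⟨hy1, hy2⟩, hy3⟩ := hy
    have hupd : Function.update y a t = y := by rw [← hy3]; exact Function.update_eq_self a y
    refine ⟨?_, ?_⟩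
    · intro i hi
      by_cases hia : i = a
      · subst hia; simp
      · rw [Function.update_apply, Function.update_apply, if_neg hia, if_neg hia]
        exact hy1 i (by simp [hia, hi])
    · rw [Function.update_idem, hupd]; exact hy2
  · intro y hy
    simp only [mem_filter, mem_cls] at hy ⊢
    obtain ⟨hy1, hy2⟩ := hy
    refine ⟨⟨?_, hy2⟩, by simp⟩
    intro i hi
    rw [mem_insert, not_or] at hi
    rw [Function.update_apply, if_neg hi.1]
    have := hy1 i hi.2
    rwa [Function.update_apply, if_neg hi.1] at this
  · intro y hy
    simp only [mem_filter, mem_cls] at hy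
    show Function.update (Function.update y a 0) a t = y
    rw [Function.update_idem, ← hy.2]
    exact Function.update_eq_self a y
  · intro y hy
    simp only [mem_filter, mem_cls] at hy
    have hya : y a = 0 := by
      have := hy.1 a ha; simpa using this
    show Function.update (Function.update y a t) a 0 = y
    rw [Function.update_idem, ← hya]
    exact Function.update_eq_self a y

lemma lin_sol {A B : F} (hA : A ≠ 0) :
    (univ.filter (fun t : F => t * A + B = 0)) = {-B / A} := by
  ext t
  simp only [mem_filter, mem_univ, true_and, mem_singleton]
  rw [eq_div_iff hA, add_eq_zero_iff_eq_neg]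

lemma lin_sol_card {A B : F} (hA : A ≠ 0) :
    (univ.filter (fun t : F => t * A + B = 0)).card = 1 := by
  rw [lin_sol hA]; simp

lemma lin_nonsol_card {A B : F} (hA : A ≠ 0) :
    (univ.filter (fun t : F => t * A + B ≠ 0)).card = Fintype.card F - 1 := by
  have h := Finset.card_filter_add_card_filter_not
    (s := (univ : Finset F)) (p := fun t : F => t * A + B = 0)
  rw [lin_sol_card hA, Finset.card_univ] at h
  simp only [ne_eq]
  omega

lemma nz (s : Finset (Fin m)) (c : Finset (Fin m) → F) (hc : c s ≠ 0) (z : Fin m → F) :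
    (Fintype.card F - 1) ^ s.card ≤ ((cls s z).filter (fun y => ev s c y ≠ 0)).card := by
  induction s using Finset.induction_on generalizing c z with
  | empty =>
    simp only [Finset.card_empty, pow_zero]
    refine Finset.card_pos.mpr ⟨z, ?_⟩
    simp only [mem_filter, mem_cls]
    exact ⟨fun i _ => trivial, by simpa [ev] using hc⟩
  | @insert a s ha ih =>
    have hA : (Fintype.card F - 1) ^ s.card
        ≤ ((cls s (Function.update z a 0)).filter
            (fun y => ev s (fun T => c (insert a T)) y ≠ 0)).card :=
      ih (fun T => c (insert a T)) hc (Function.update z a 0)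
    have hpred : ∀ (t : F) (y : Fin m → F),
        ev (insert a s) c (Function.update y a t)
          = t * ev s (fun T => c (insert a T)) y + ev s c y := by
      intro t y
      rw [ev_insert ha, Function.update_self]
      have hca : ∀ (cc : Finset (Fin m) → F),
          ev s cc (Function.update y a t) = ev s cc y := fun cc =>
        ev_congr (fun i hi => Function.update_of_ne (ne_of_mem_of_not_mem hi ha) _ _)
      rw [hca, hca]
    calc (Fintype.card F - 1) ^ (insert a s).card
        = (Fintype.card F - 1) ^ s.card * (Fintype.card F - 1) := by
          rw [Finset.card_insert_of_notMem ha, pow_succ]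
      _ ≤ ((cls s (Function.update z a 0)).filter
            (fun y => ev s (fun T => c (insert a T)) y ≠ 0)).card * (Fintype.card F - 1) :=
          Nat.mul_le_mul_right _ hA
      _ = ∑ y ∈ (cls s (Function.update z a 0)).filter
            (fun y => ev s (fun T => c (insert a T)) y ≠ 0), (Fintype.card F - 1) := by
          rw [Finset.sum_const, smul_eq_mul]
      _ = ∑ y ∈ (cls s (Function.update z a 0)).filter
            (fun y => ev s (fun T => c (insert a T)) y ≠ 0),
            ((univ : Finset F).filter
              (fun t => t * ev s (fun T => c (insert a T)) y + ev s c y ≠ 0)).card :=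
          Finset.sum_congr rfl (fun y hy => (lin_nonsol_card (mem_filter.mp hy).2).symm)
      _ ≤ ∑ y ∈ cls s (Function.update z a 0),
            ((univ : Finset F).filter
              (fun t => t * ev s (fun T => c (insert a T)) y + ev s c y ≠ 0)).card :=
          Finset.sum_le_sum_of_subset (Finset.filter_subset _ _)
      _ = ∑ y ∈ cls s (Function.update z a 0), ∑ t : F,
            (if t * ev s (fun T => c (insert a T)) y + ev s c y ≠ 0 then 1 else 0) := by
          simp [Finset.card_filter]
      _ = ∑ t : F, ∑ y ∈ cls s (Function.update z a 0),
            (if t * ev s (fun T => c (insert a T)) y + ev s c y ≠ 0 then 1 else 0) :=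
          Finset.sum_comm
      _ = ∑ t : F, ((cls s (Function.update z a 0)).filter
            (fun y => t * ev s (fun T => c (insert a T)) y + ev s c y ≠ 0)).card := by
          simp [Finset.card_filter]
      _ = ((cls (insert a s) z).filter (fun y => ev (insert a s) c y ≠ 0)).card := by
          have hf := fiber_count ha z (fun y => ev (insert a s) c y ≠ 0)
          rw [hf]
          refine Finset.sum_congr rfl fun t _ => congrArg Finset.card ?_
          ext y
          simp only [mem_filter, hpred t y]

lemma zs {a : Fin m} {s : Finset (Fin m)} (ha : a ∉ s) (c : Finset (Fin m) → F)
    (hc : c (insert a s) ≠ 0) (z : Fin m → F) :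
    (Fintype.card F - 1) ^ s.card ≤
      ((cls (insert a s) z).filter (fun y => ev (insert a s) c y = 0)).card := by
  have hpred : ∀ (t : F) (y : Fin m → F),
      ev (insert a s) c (Function.update y a t)
        = t * ev s (fun T => c (insert a T)) y + ev s c y := by
    intro t y
    rw [ev_insert ha, Function.update_self]
    have hca : ∀ (cc : Finset (Fin m) → F),
        ev s cc (Function.update y a t) = ev s cc y := fun cc =>
      ev_congr (fun i hi => Function.update_of_ne (ne_of_mem_of_not_mem hi ha) _ _)
    rw [hca, hca]
  calc (Fintype.card F - 1) ^ s.card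
      ≤ ((cls s (Function.update z a 0)).filter
          (fun y => ev s (fun T => c (insert a T)) y ≠ 0)).card :=
        nz s (fun T => c (insert a T)) hc (Function.update z a 0)
    _ = ∑ y ∈ (cls s (Function.update z a 0)).filter
          (fun y => ev s (fun T => c (insert a T)) y ≠ 0),
          ((univ : Finset F).filter
            (fun t => t * ev s (fun T => c (insert a T)) y + ev s c y = 0)).card := by
        rw [Finset.sum_congr rfl (fun y hy => (lin_sol_card (mem_filter.mp hy).2))]
        simp
    _ ≤ ∑ y ∈ cls s (Function.update z a 0),
          ((univ : Finset F).filter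
            (fun t => t * ev s (fun T => c (insert a T)) y + ev s c y = 0)).card :=
        Finset.sum_le_sum_of_subset (Finset.filter_subset _ _)
    _ = ∑ y ∈ cls s (Function.update z a 0), ∑ t : F,
          (if t * ev s (fun T => c (insert a T)) y + ev s c y = 0 then 1 else 0) := by
        simp only [Finset.card_filter]
    _ = ∑ t : F, ∑ y ∈ cls s (Function.update z a 0),
          (if t * ev s (fun T => c (insert a T)) y + ev s c y = 0 then 1 else 0) :=
        Finset.sum_comm
    _ = ∑ t : F, ((cls s (Function.update z a 0)).filter
          (fun y => t * ev s (fun T => c (insert a T)) y + ev s c y = 0)).card := by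
        simp only [Finset.card_filter]
    _ = ((cls (insert a s) z).filter (fun y => ev (insert a s) c y = 0)).card := by
        have hf := fiber_count ha z (fun y => ev (insert a s) c y = 0)
        rw [hf]
        refine Finset.sum_congr rfl fun t _ => congrArg Finset.card ?_
        ext y
        simp only [mem_filter, hpred t y]

/-- Lower bound on the number of zeros of a nonzero multilinear homogeneous
polynomial of degree `k ≤ m` over a finite field with `q` elements:
`#Z ≥ q^(m-k) * (q-1)^(k-1)`. -/
theorem zero_set_lower_bound (F : Type) [Field F] [Fintype F] [DecidableEq F]
    (q : ℕ) (hq : q = Fintype.card F)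
    (m k : ℕ) (hk : 1 ≤ k) (hkm : k ≤ m)
    (δ : Finset (Fin m) → F)
    (hδ : ∃ I : Finset (Fin m), I.card = k ∧ δ I ≠ 0) :
    q ^ (m - k) * (q - 1) ^ (k - 1)
      ≤ (Finset.univ.filter (fun y : Fin m → F =>
          ∑ I ∈ Finset.univ.filter (fun I : Finset (Fin m) => I.card = k),
            δ I * ∏ i ∈ I, y i = 0)).card := by
  subst hq
  obtain ⟨I₀, hI₀card, hδ0⟩ := hδ
  have hI₀ne : I₀.Nonempty := Finset.card_pos.mp (by omega)
  obtain ⟨a, haI⟩ := hI₀ne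
  -- the fiber index type
  have hcardsub : Fintype.card {i : Fin m // i ∉ I₀} = m - k := by
    rw [Fintype.card_subtype]
    have : univ.filter (fun i : Fin m => i ∉ I₀) = I₀ᶜ := by
      ext i; simp
    rw [this, Finset.card_compl, hI₀card, Fintype.card_fin]
  -- per fiber data
  have main : ∀ z : {i : Fin m // i ∉ I₀} → F,
      (Fintype.card F - 1) ^ (k - 1) ≤
        ((univ.filter (fun y : Fin m → F =>
          ∑ I ∈ univ.filter (fun I : Finset (Fin m) => I.card = k),
            δ I * ∏ i ∈ I, y i = 0)).filter
          (fun y => (fun i : {i : Fin m // i ∉ I₀} => y i.1) = z)).card := by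
    intro z
    set ze : Fin m → F := fun i => if h : i ∈ I₀ then (0:F) else z ⟨i, h⟩ with hze
    set cz : Finset (Fin m) → F := fun T =>
      ∑ I ∈ univ.filter (fun I : Finset (Fin m) => I.card = k ∧ I ∩ I₀ = T),
        δ I * ∏ i ∈ I \ I₀, ze i with hcz
    have claim1 : ∀ y : Fin m → F, (∀ i ∉ I₀, y i = ze i) →
        (∑ I ∈ univ.filter (fun I : Finset (Fin m) => I.card = k),
          δ I * ∏ i ∈ I, y i) = ev I₀ cz y := by
      intro y hy
      rw [← Finset.sum_fiberwise_of_maps_to (g := fun I => I ∩ I₀)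
        (t := I₀.powerset) (fun I _ => Finset.mem_powerset.mpr Finset.inter_subset_right)]
      unfold ev
      rw [hcz]
      refine Finset.sum_congr rfl fun T hT => ?_
      rw [Finset.sum_mul, Finset.filter_filter]
      refine Finset.sum_congr rfl fun I hI => ?_
      rw [mem_filter] at hI
      obtain ⟨-, hIk, hIT⟩ := hI
      have h1 : ∏ i ∈ I \ I₀, ze i = ∏ i ∈ I \ I₀, y i :=
        Finset.prod_congr rfl fun i hi => (hy i (Finset.mem_sdiff.mp hi).2).symm
      rw [h1, ← hIT, mul_assoc, mul_comm (∏ i ∈ I \ I₀, y i)]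
      rw [Finset.prod_inter_mul_prod_diff]
    have claim2 : cz I₀ = δ I₀ := by
      have hfil : univ.filter (fun I : Finset (Fin m) => I.card = k ∧ I ∩ I₀ = I₀) = {I₀} := by
        ext I
        simp only [mem_filter, mem_univ, true_and, mem_singleton]
        constructor
        · rintro ⟨hIk, hII⟩
          have hsub : I₀ ⊆ I := Finset.inter_eq_right.mp hII
          exact (Finset.eq_of_subset_of_card_le hsub (by omega)).symm
        · rintro rfl
          exact ⟨hI₀card, Finset.inter_self _⟩
      simp only [hcz]
      rw [hfil, Finset.sum_singleton, Finset.sdiff_self, Finset.prod_empty, mul_one]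
    -- identify the fiber with a zero set of `ev I₀ cz`
    have hsetseq : (univ.filter (fun y : Fin m → F =>
          ∑ I ∈ univ.filter (fun I : Finset (Fin m) => I.card = k),
            δ I * ∏ i ∈ I, y i = 0)).filter
          (fun y => (fun i : {i : Fin m // i ∉ I₀} => y i.1) = z)
        = (cls I₀ ze).filter (fun y => ev I₀ cz y = 0) := by
      ext y
      simp only [mem_filter, mem_univ, true_and, mem_cls, funext_iff]
      constructor
      · rintro ⟨hP, hres⟩
        have hcl : ∀ i ∉ I₀, y i = ze i := by
          intro i hi
          rw [hze]; simp only [dif_neg hi]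
          exact hres ⟨i, hi⟩
        exact ⟨hcl, by rw [← claim1 y hcl]; exact hP⟩
      · rintro ⟨hcl, hev⟩
        refine ⟨by rw [claim1 y hcl]; exact hev, ?_⟩
        intro i
        have := hcl i.1 i.2
        rw [hze] at this
        simpa [dif_neg i.2] using this
    rw [hsetseq]
    -- apply the zeros lemma
    have hins : insert a (I₀.erase a) = I₀ := Finset.insert_erase haI
    have hcz0 : cz (insert a (I₀.erase a)) ≠ 0 := by rw [hins, claim2]; exact hδ0
    have h := zs (Finset.notMem_erase a I₀) cz hcz0 ze
    rw [hins] at h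
    rwa [Finset.card_erase_of_mem haI, hI₀card] at h
  -- sum over fibers
  rw [Finset.card_eq_sum_card_fiberwise
    (f := fun y : Fin m → F => (fun i : {i : Fin m // i ∉ I₀} => y i.1))
    (t := univ) (fun x _ => mem_univ _)]
  calc Fintype.card F ^ (m - k) * (Fintype.card F - 1) ^ (k - 1)
      = ∑ _z : {i : Fin m // i ∉ I₀} → F, (Fintype.card F - 1) ^ (k - 1) := by
        rw [Finset.sum_const, smul_eq_mul, Finset.card_univ, Fintype.card_fun, hcardsub]
    _ ≤ _ := Finset.sum_le_sum fun z _ => main z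
end

section
/- For every prime power q and integer k ≥ 1, q^{m-k}·(q^k − (q−1)^k) ≤ q^{m-k}·(q−1)^{k-1}·(2^k − 1) for all m ≥ k. Consequently, the number of zeros of a nonzero multilinear homogeneous polynomial of degree k in m variables over F_q is between q^{m-k}(q−1)^{k-1} and q^{m-k}(q−1)^{k-1}(2^k − 1). -/
open Finset

set_option linter.unusedSectionVars false
set_option maxHeartbeats 1000000

namespace ZCO

variable {F : Type} [Field F] [Fintype F] [DecidableEq F]
variable {ι : Type} [Fintype ι] [DecidableEq ι]

noncomputable def ev (P : Finset ι → F) (y : ι → F) : F :=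
  ∑ I : Finset ι, P I * ∏ i ∈ I, y i

noncomputable def Ac (a : ι) (P : Finset ι → F) : Finset ι → F :=
  fun I => if a ∈ I then 0 else P (insert a I)

noncomputable def Bc (a : ι) (P : Finset ι → F) : Finset ι → F :=
  fun I => if a ∈ I then 0 else P I

lemma Ac_notmem (a : ι) (P : Finset ι → F) {I : Finset ι} (h : Ac a P I ≠ 0) : a ∉ I := by
  intro hm; apply h; simp [Ac, hm]

lemma Bc_notmem (a : ι) (P : Finset ι → F) {I : Finset ι} (h : Bc a P I ≠ 0) : a ∉ I := by
  intro hm; apply h; simp [Bc, hm]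

lemma ev_split (a : ι) (P : Finset ι → F) (y : ι → F) :
    ev P y = y a * ev (Ac a P) y + ev (Bc a P) y := by
  classical
  have h1 : ev (Bc a P) y
      = ∑ I ∈ univ.filter (fun I : Finset ι => a ∉ I), P I * ∏ i ∈ I, y i := by
    rw [Finset.sum_filter]
    refine Finset.sum_congr rfl fun I _ => ?_
    by_cases h : a ∈ I <;> simp [ev, Bc, h]
  have h2 : y a * ev (Ac a P) y
      = ∑ I ∈ univ.filter (fun I : Finset ι => a ∈ I), P I * ∏ i ∈ I, y i := by
    rw [ev, Finset.mul_sum]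
    have e1 : ∑ I : Finset ι, y a * (Ac a P I * ∏ i ∈ I, y i)
        = ∑ I ∈ univ.filter (fun I : Finset ι => a ∉ I),
            P (insert a I) * ∏ i ∈ insert a I, y i := by
      rw [Finset.sum_filter]
      refine Finset.sum_congr rfl fun I _ => ?_
      by_cases h : a ∈ I
      · simp [Ac, h]
      · rw [Finset.prod_insert h]
        simp [Ac, h]
        ring
    rw [e1]
    refine Finset.sum_nbij' (i := fun I => insert a I) (j := fun J => J.erase a)
      ?_ ?_ ?_ ?_ ?_
    · intro I hI
      simp only [mem_filter, mem_univ, true_and] at hI ⊢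
      exact mem_insert_self a I
    · intro J hJ
      simp only [mem_filter, mem_univ, true_and] at hJ ⊢
      exact notMem_erase a J
    · intro I hI
      simp only [mem_filter, mem_univ, true_and] at hI
      exact Finset.erase_insert hI
    · intro J hJ
      simp only [mem_filter, mem_univ, true_and] at hJ
      exact Finset.insert_erase hJ
    · intro I hI
      rfl
  rw [ev, ← Finset.sum_filter_add_sum_filter_not univ (fun I : Finset ι => a ∈ I)
      (fun I => P I * ∏ i ∈ I, y i), h1, h2]

lemma ev_indep {a : ι} {P : Finset ι → F} (hP : ∀ I, P I ≠ 0 → a ∉ I) (y : ι → F) (t : F) :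
    ev P (Function.update y a t) = ev P y := by
  refine Finset.sum_congr rfl fun I _ => ?_
  by_cases h : P I = 0
  · simp [h]
  · have ha := hP I h
    congr 1
    refine Finset.prod_congr rfl fun i hi => ?_
    exact Function.update_of_ne (fun (hia : i = a) => ha (hia ▸ hi)) t y

lemma card_slice (a : ι) (c : F) (p : (ι → F) → Prop) [DecidablePred p]
    (hp : ∀ y t, p (Function.update y a t) ↔ p y) :
    (univ.filter p).card
      = Fintype.card F * (univ.filter fun z : ι → F => z a = c ∧ p z).card := by
  classical
  rw [Finset.card_eq_sum_card_fiberwise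
    (f := fun y => Function.update y a c)
    (t := univ.filter fun z : ι → F => z a = c ∧ p z)
    (fun y hy => by
      simp only [Finset.mem_coe, mem_filter, mem_univ, true_and] at hy ⊢
      exact ⟨Function.update_self a c y, (hp y c).mpr hy⟩)]
  have hfib : ∀ z ∈ univ.filter (fun z : ι → F => z a = c ∧ p z),
      ((univ.filter p).filter fun y => Function.update y a c = z).card = Fintype.card F := by
    intro z hz
    simp only [mem_filter, mem_univ, true_and] at hz
    have : ((univ.filter p).filter fun y => Function.update y a c = z)
        = Finset.image (fun t => Function.update z a t) univ := by
      ext y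
      simp only [mem_filter, mem_univ, true_and, Finset.mem_image]
      constructor
      · rintro ⟨hpy, hyz⟩
        refine ⟨y a, ?_⟩
        funext i
        by_cases hi : i = a
        · subst hi; simp
        · rw [Function.update_of_ne hi]
          have := congrFun hyz i
          rw [Function.update_of_ne hi] at this
          rw [← this]
      · rintro ⟨t, rfl⟩
        refine ⟨(hp z t).mpr hz.2, ?_⟩
        rw [Function.update_idem]
        rw [← hz.1, Function.update_eq_self]
    rw [this, Finset.card_image_of_injective _ (Function.update_injective z a), card_univ]
  rw [Finset.sum_congr rfl hfib, Finset.sum_const, smul_eq_mul, mul_comm]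

lemma main_lemma (S : Finset ι) : ∀ (d : ℕ) (P : Finset ι → F),
    (∀ I, P I ≠ 0 → I ⊆ S) → (∀ I, P I ≠ 0 → I.card ≤ d) → (∃ I, P I ≠ 0) →
    d ≤ S.card →
    (Fintype.card F - 1) ^ d * Fintype.card F ^ (Fintype.card ι - d)
      ≤ (univ.filter fun y : ι → F => ev P y ≠ 0).card := by
  classical
  induction S using Finset.strongInduction with
  | _ S IH =>
  intro d P hsupp hdeg hP hd
  obtain ⟨q, hq⟩ : ∃ q, Fintype.card F = q := ⟨_, rfl⟩
  obtain ⟨n, hn⟩ : ∃ n, Fintype.card ι = n := ⟨_, rfl⟩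
  rw [hq, hn]
  have hq2 : 2 ≤ q := hq ▸ Fintype.one_lt_card
  have hSn : S.card ≤ n := by
    rw [← hn, ← Finset.card_univ]; exact Finset.card_le_univ S
  have hdn : d ≤ n := hd.trans hSn
  by_cases hconst : ∀ I, P I ≠ 0 → I = ∅
  · obtain ⟨I₀, hI₀⟩ := hP
    have hI0e : I₀ = ∅ := hconst _ hI₀
    have hev : ∀ y : ι → F, ev P y = P ∅ := by
      intro y
      rw [ev, Finset.sum_eq_single ∅]
      · simp
      · intro I _ hne
        have hz : P I = 0 := by
          by_contra h; exact hne (hconst I h)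
        simp [hz]
      · simp
    have hfull : (univ.filter fun y : ι → F => ev P y ≠ 0) = univ := by
      apply Finset.filter_true_of_mem
      intro y _
      rw [hev, ← hI0e]; exact hI₀
    rw [hfull, card_univ]
    have hcf : Fintype.card (ι → F) = q ^ n := by
      rw [Fintype.card_fun, hq, hn]
    rw [hcf]
    calc (q-1)^d * q^(n-d) ≤ q^d * q^(n-d) :=
          Nat.mul_le_mul_right _ (Nat.pow_le_pow_left (Nat.sub_le q 1) d)
      _ = q ^ n := by rw [← pow_add]; congr 1; omega
  · push_neg at hconst
    obtain ⟨I₁, hne1, hI1⟩ := hconst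
    have hne : (univ.filter fun I : Finset ι => P I ≠ 0).Nonempty :=
      ⟨I₁, by simp [hne1]⟩
    obtain ⟨I₀, hI₀mem, hI₀max⟩ := Finset.exists_max_image _ Finset.card hne
    simp only [mem_filter, mem_univ, true_and] at hI₀mem
    have hI₀ne : I₀.Nonempty := by
      rw [Finset.nonempty_iff_ne_empty]
      intro h
      apply hI1.ne_empty
      have h2 := hI₀max I₁ (by simp [hne1])
      rw [h] at h2
      simpa using Finset.card_eq_zero.mp (Nat.le_zero.mp (by simpa using h2))
    obtain ⟨a, haI₀⟩ := hI₀ne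
    have haS : a ∈ S := hsupp I₀ hI₀mem haI₀
    have hd1 : 1 ≤ d := le_trans (Finset.card_pos.mpr ⟨a, haI₀⟩) (hdeg I₀ hI₀mem)
    set A := Ac a P with hA
    set B := Bc a P with hB
    have hAsupp : ∀ I, A I ≠ 0 → I ⊆ S.erase a := by
      intro I hI
      have haI : a ∉ I := Ac_notmem a P hI
      have hPI : P (insert a I) ≠ 0 := by simpa [hA, Ac, haI] using hI
      have hsub := hsupp _ hPI
      intro i hiI
      exact Finset.mem_erase.mpr ⟨fun h => haI (h ▸ hiI), hsub (Finset.mem_insert_of_mem hiI)⟩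
    have hAdeg : ∀ I, A I ≠ 0 → I.card ≤ d - 1 := by
      intro I hI
      have haI : a ∉ I := Ac_notmem a P hI
      have hPI : P (insert a I) ≠ 0 := by simpa [hA, Ac, haI] using hI
      have hc := hdeg _ hPI
      rw [Finset.card_insert_of_notMem haI] at hc
      omega
    have hAne : ∃ I, A I ≠ 0 := by
      refine ⟨I₀.erase a, ?_⟩
      have he : A (I₀.erase a) = P I₀ := by
        simp [hA, Ac, Finset.notMem_erase, Finset.insert_erase haI₀]
      rw [he]; exact hI₀mem
    have hAd : d - 1 ≤ (S.erase a).card := by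
      rw [Finset.card_erase_of_mem haS]; omega
    have hIH := IH (S.erase a) (Finset.erase_ssubset haS) (d-1) A hAsupp hAdeg hAne hAd
    rw [hq, hn] at hIH
    have hq0 : 0 < q := by omega
    have harith1 : n - (d-1) = (n-d)+1 := by omega
    have hdd : d - 1 + 1 = d := by omega
    have hslice : (univ.filter fun z : ι → F => ev A z ≠ 0).card
        = q * (univ.filter fun z : ι → F => z a = 0 ∧ ev A z ≠ 0).card := by
      rw [← hq]
      exact card_slice a (0:F) (fun z : ι → F => ev A z ≠ 0)
        (fun y t => by
          show ev A (Function.update y a t) ≠ 0 ↔ ev A y ≠ 0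
          rw [ev_indep (fun I h => Ac_notmem a P h)])
    have hNA0 : (q-1)^(d-1) * q^(n-d)
        ≤ (univ.filter fun z : ι → F => z a = 0 ∧ ev A z ≠ 0).card := by
      refine Nat.le_of_mul_le_mul_left ?_ hq0
      rw [← hslice]
      calc q * ((q-1)^(d-1) * q^(n-d)) = (q-1)^(d-1) * q^(n-(d-1)) := by
            rw [harith1, pow_succ]; ring
        _ ≤ _ := hIH
    have hcount : (q-1) * (univ.filter fun z : ι → F => z a = 0 ∧ ev A z ≠ 0).card
        ≤ (univ.filter fun y : ι → F => ev P y ≠ 0).card := by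
      have hfib : (univ.filter fun y : ι → F => ev P y ≠ 0).card
          = ∑ z ∈ univ.filter (fun z : ι → F => z a = 0),
              ((univ.filter fun y : ι → F => ev P y ≠ 0).filter
                fun y => Function.update y a 0 = z).card :=
        Finset.card_eq_sum_card_fiberwise (fun y hy => by simp)
      rw [hfib]
      have hsub : (univ.filter fun z : ι → F => z a = 0 ∧ ev A z ≠ 0)
          ⊆ (univ.filter fun z : ι → F => z a = 0) := by
        intro z hz
        simp only [mem_filter, mem_univ, true_and] at hz ⊢
        exact hz.1
      refine le_trans ?_ (Finset.sum_le_sum_of_subset hsub)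
      have hper : ∀ z ∈ (univ.filter fun z : ι → F => z a = 0 ∧ ev A z ≠ 0),
          q - 1 ≤ ((univ.filter fun y : ι → F => ev P y ≠ 0).filter
            fun y => Function.update y a 0 = z).card := by
        intro z hz
        simp only [mem_filter, mem_univ, true_and] at hz
        obtain ⟨hza, hAz⟩ := hz
        have himg : Finset.image (fun t => Function.update z a t)
            (univ.filter fun t : F => t * ev A z + ev B z ≠ 0)
            ⊆ (univ.filter fun y : ι → F => ev P y ≠ 0).filter
              fun y => Function.update y a 0 = z := by
          intro y hy
          simp only [Finset.mem_image, mem_filter, mem_univ, true_and] at hy ⊢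
          obtain ⟨t, ht, rfl⟩ := hy
          constructor
          · rw [ev_split a P, ev_indep (fun I h => Ac_notmem a P h),
              ev_indep (fun I h => Bc_notmem a P h), Function.update_self]
            exact ht
          · rw [Function.update_idem, ← hza, Function.update_eq_self]
        have hbig : (univ.erase (-(ev B z) * (ev A z)⁻¹))
            ⊆ univ.filter fun t : F => t * ev A z + ev B z ≠ 0 := by
          intro t ht
          rw [Finset.mem_erase] at ht
          simp only [mem_filter, mem_univ, true_and]
          intro h0
          exact ht.1 ((eq_mul_inv_iff_mul_eq₀ hAz).mpr (eq_neg_of_add_eq_zero_left h0))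
        have hcard1 := Finset.card_le_card hbig
        rw [Finset.card_erase_of_mem (mem_univ _), card_univ, hq] at hcard1
        calc q - 1 ≤ (univ.filter fun t : F => t * ev A z + ev B z ≠ 0).card := hcard1
          _ = (Finset.image (fun t => Function.update z a t)
              (univ.filter fun t : F => t * ev A z + ev B z ≠ 0)).card :=
            (Finset.card_image_of_injective _ (Function.update_injective z a)).symm
          _ ≤ _ := Finset.card_le_card himg
      calc (q-1) * (univ.filter fun z : ι → F => z a = 0 ∧ ev A z ≠ 0).card
          = ∑ _z ∈ (univ.filter fun z : ι → F => z a = 0 ∧ ev A z ≠ 0), (q-1) := by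
            rw [Finset.sum_const, smul_eq_mul, mul_comm]
        _ ≤ _ := Finset.sum_le_sum hper
    calc (q-1)^d * q^(n-d) = (q-1) * ((q-1)^(d-1) * q^(n-d)) := by
          rw [← mul_assoc]
          congr 1
          rw [← pow_succ']
          rw [hdd]
      _ ≤ (q-1) * (univ.filter fun z : ι → F => z a = 0 ∧ ev A z ≠ 0).card :=
          Nat.mul_le_mul_left _ hNA0
      _ ≤ _ := hcount

lemma ev_lin (t : F) (A B : Finset ι → F) (y : ι → F) :
    ev (fun I => t * A I + B I) y = t * ev A y + ev B y := by
  simp only [ev, add_mul, mul_assoc, Finset.sum_add_distrib, Finset.mul_sum]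

lemma zeros_lemma (T : Finset ι) : ∀ (S : Finset ι) (P : Finset ι → F),
    (∀ I, P I ≠ 0 → I ⊆ S ∪ T) → (∀ I, P I ≠ 0 → I.card ≤ S.card) → P S ≠ 0 →
    S.Nonempty →
    (Fintype.card F - 1) ^ (S.card - 1) * Fintype.card F ^ (Fintype.card ι - S.card)
      ≤ (univ.filter fun y : ι → F => ev P y = 0).card := by
  classical
  induction T using Finset.strongInduction with
  | _ T IH =>
  intro S P hsupp hdeg hPS hSne
  obtain ⟨q, hq⟩ : ∃ q, Fintype.card F = q := ⟨_, rfl⟩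
  obtain ⟨n, hn⟩ : ∃ n, Fintype.card ι = n := ⟨_, rfl⟩
  rw [hq, hn]
  have hq2 : 2 ≤ q := hq ▸ Fintype.one_lt_card
  have hq0 : 0 < q := by omega
  have hSn : S.card ≤ n := by
    rw [← hn, ← Finset.card_univ]; exact Finset.card_le_univ S
  have hk1 : 1 ≤ S.card := Finset.card_pos.mpr hSne
  by_cases hTS : ∀ I, P I ≠ 0 → I ⊆ S
  · -- support contained in S : direct argument
    obtain ⟨a, haS⟩ := hSne
    have harith : n - (S.card - 1) = (n - S.card) + 1 := by omega
    set A := Ac a P with hA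
    have hAsupp : ∀ I, A I ≠ 0 → I ⊆ S.erase a := by
      intro I hI
      have haI : a ∉ I := Ac_notmem a P hI
      have hPI : P (insert a I) ≠ 0 := by simpa [hA, Ac, haI] using hI
      have hsub := hTS _ hPI
      intro i hiI
      exact Finset.mem_erase.mpr ⟨fun h => haI (h ▸ hiI), hsub (Finset.mem_insert_of_mem hiI)⟩
    have hAdeg : ∀ I, A I ≠ 0 → I.card ≤ S.card - 1 := by
      intro I hI
      have := Finset.card_le_card (hAsupp I hI)
      rwa [Finset.card_erase_of_mem haS] at this
    have hAne : ∃ I, A I ≠ 0 := by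
      refine ⟨S.erase a, ?_⟩
      have he : A (S.erase a) = P S := by
        simp [hA, Ac, Finset.notMem_erase, Finset.insert_erase haS]
      rw [he]; exact hPS
    have hAd : S.card - 1 ≤ (S.erase a).card := by
      rw [Finset.card_erase_of_mem haS]
    have hNZ := main_lemma (S.erase a) (S.card - 1) A hAsupp hAdeg hAne hAd
    rw [hq, hn] at hNZ
    have hslice : (univ.filter fun z : ι → F => ev A z ≠ 0).card
        = q * (univ.filter fun z : ι → F => z a = 0 ∧ ev A z ≠ 0).card := by
      rw [← hq]
      exact card_slice a (0:F) (fun z : ι → F => ev A z ≠ 0)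
        (fun y t => by
          show ev A (Function.update y a t) ≠ 0 ↔ ev A y ≠ 0
          rw [ev_indep (fun I h => Ac_notmem a P h)])
    have hNA0 : (q-1)^(S.card-1) * q^(n-S.card)
        ≤ (univ.filter fun z : ι → F => z a = 0 ∧ ev A z ≠ 0).card := by
      refine Nat.le_of_mul_le_mul_left ?_ hq0
      rw [← hslice]
      calc q * ((q-1)^(S.card-1) * q^(n-S.card))
          = (q-1)^(S.card-1) * q^(n-(S.card-1)) := by
            rw [harith, pow_succ]; ring
        _ ≤ _ := hNZ
    have hfib : (univ.filter fun y : ι → F => ev P y = 0).card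
        = ∑ z ∈ univ.filter (fun z : ι → F => z a = 0),
            ((univ.filter fun y : ι → F => ev P y = 0).filter
              fun y => Function.update y a 0 = z).card :=
      Finset.card_eq_sum_card_fiberwise (fun y hy => by simp)
    rw [hfib]
    have hsub : (univ.filter fun z : ι → F => z a = 0 ∧ ev A z ≠ 0)
        ⊆ (univ.filter fun z : ι → F => z a = 0) := by
      intro z hz
      simp only [mem_filter, mem_univ, true_and] at hz ⊢
      exact hz.1
    refine le_trans ?_ (Finset.sum_le_sum_of_subset hsub)
    have hper : ∀ z ∈ (univ.filter fun z : ι → F => z a = 0 ∧ ev A z ≠ 0),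
        1 ≤ ((univ.filter fun y : ι → F => ev P y = 0).filter
          fun y => Function.update y a 0 = z).card := by
      intro z hz
      simp only [mem_filter, mem_univ, true_and] at hz
      obtain ⟨hza, hAz⟩ := hz
      refine Finset.card_pos.mpr ⟨Function.update z a (-(ev (Bc a P) z) * (ev A z)⁻¹), ?_⟩
      simp only [mem_filter, mem_univ, true_and]
      constructor
      · rw [ev_split a P, ev_indep (fun I h => Ac_notmem a P h),
          ev_indep (fun I h => Bc_notmem a P h), Function.update_self]
        rw [mul_assoc, inv_mul_cancel₀ hAz, mul_one, neg_add_cancel]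
      · rw [Function.update_idem, ← hza, Function.update_eq_self]
    calc (q-1)^(S.card-1) * q^(n-S.card)
        ≤ (univ.filter fun z : ι → F => z a = 0 ∧ ev A z ≠ 0).card := hNA0
      _ = ∑ _z ∈ (univ.filter fun z : ι → F => z a = 0 ∧ ev A z ≠ 0), 1 := by
          rw [Finset.sum_const, smul_eq_mul, mul_one]
      _ ≤ _ := Finset.sum_le_sum hper
  · -- recursive case: eliminate a variable a ∈ T outside S
    push_neg at hTS
    obtain ⟨J, hJne, hJnsub⟩ := hTS
    obtain ⟨a, haJ, haS⟩ := Finset.not_subset.mp hJnsub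
    have haT : a ∈ T := by
      have := hsupp J hJne haJ
      rcases Finset.mem_union.mp this with h | h
      · exact absurd h haS
      · exact h
    have hSn1 : S.card < n := by
      have : S.card ≤ (univ.erase a).card := by
        apply Finset.card_le_card
        intro i hi
        exact Finset.mem_erase.mpr ⟨fun h => haS (h ▸ hi), mem_univ i⟩
      rw [Finset.card_erase_of_mem (mem_univ a), Finset.card_univ, hn] at this
      omega
    have harith2 : n - S.card = (n - S.card - 1) + 1 := by omega
    -- for each value t of variable a, the specialized polynomial
    have hmain : ∀ t : F, (q-1)^(S.card-1) * q^(n-S.card-1)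
        ≤ (univ.filter fun z : ι → F => z a = t ∧ ev P z = 0).card := by
      intro t
      have hPtnm : ∀ I, (fun I => t * Ac a P I + Bc a P I) I ≠ 0 → a ∉ I := by
        intro I hI
        by_contra haI
        apply hI
        simp [Ac, Bc, haI]
      have hPtor : ∀ I, (fun I => t * Ac a P I + Bc a P I) I ≠ 0 →
          Ac a P I ≠ 0 ∨ Bc a P I ≠ 0 := by
        intro I hI
        by_contra hcon
        push_neg at hcon
        apply hI
        simp [hcon.1, hcon.2]
      have hPtsupp : ∀ I, (fun I => t * Ac a P I + Bc a P I) I ≠ 0 → I ⊆ S ∪ T.erase a := by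
        intro I hI
        have haI : a ∉ I := hPtnm I hI
        have hIST : I ⊆ S ∪ T := by
          rcases hPtor I hI with h | h
          · have hPI : P (insert a I) ≠ 0 := by
              simpa [Ac, Ac_notmem a P h] using h
            exact (Finset.subset_insert a I).trans (hsupp _ hPI)
          · have hPI : P I ≠ 0 := by
              simpa [Bc, Bc_notmem a P h] using h
            exact hsupp _ hPI
        intro i hiI
        rcases Finset.mem_union.mp (hIST hiI) with h | h
        · exact Finset.mem_union_left _ h
        · exact Finset.mem_union_right _
            (Finset.mem_erase.mpr ⟨fun he => haI (he ▸ hiI), h⟩)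
      have hPtdeg : ∀ I, (fun I => t * Ac a P I + Bc a P I) I ≠ 0 → I.card ≤ S.card := by
        intro I hI
        rcases hPtor I hI with h | h
        · have haI : a ∉ I := Ac_notmem a P h
          have hPI : P (insert a I) ≠ 0 := by simpa [Ac, haI] using h
          have := hdeg _ hPI
          rw [Finset.card_insert_of_notMem haI] at this
          omega
        · have hPI : P I ≠ 0 := by simpa [Bc, Bc_notmem a P h] using h
          exact hdeg _ hPI
      have hPtS : (fun I => t * Ac a P I + Bc a P I) S = P S := by
        have h1 : Ac a P S = 0 := by
          have : P (insert a S) = 0 := by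
            by_contra h
            have := hdeg _ h
            rw [Finset.card_insert_of_notMem haS] at this
            omega
          simp [Ac, haS, this]
        have h2 : Bc a P S = P S := by simp [Bc, haS]
        show t * Ac a P S + Bc a P S = P S
        rw [h1, h2, mul_zero, zero_add]
      have hIH := IH (T.erase a) (Finset.erase_ssubset haT) S
        (fun I => t * Ac a P I + Bc a P I) hPtsupp hPtdeg (by show (fun I => t * Ac a P I + Bc a P I) S ≠ 0; rw [hPtS]; exact hPS) hSne
      rw [hq, hn] at hIH
      have hslicet : (univ.filter fun z : ι → F =>
            ev (fun I => t * Ac a P I + Bc a P I) z = 0).card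
          = q * (univ.filter fun z : ι → F =>
              z a = t ∧ ev (fun I => t * Ac a P I + Bc a P I) z = 0).card := by
        rw [← hq]
        exact card_slice a t
          (fun z : ι → F => ev (fun I => t * Ac a P I + Bc a P I) z = 0)
          (fun y u => by
            show ev (fun I => t * Ac a P I + Bc a P I) (Function.update y a u) = 0
              ↔ ev (fun I => t * Ac a P I + Bc a P I) y = 0
            rw [ev_indep hPtnm])
      have heq : (univ.filter fun z : ι → F =>
            z a = t ∧ ev (fun I => t * Ac a P I + Bc a P I) z = 0)
          = (univ.filter fun z : ι → F => z a = t ∧ ev P z = 0) := by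
        ext z
        simp only [mem_filter, mem_univ, true_and]
        constructor
        · rintro ⟨hza, h⟩
          refine ⟨hza, ?_⟩
          rw [ev_split a P, hza, ← ev_lin t (Ac a P) (Bc a P) z]
          exact h
        · rintro ⟨hza, h⟩
          refine ⟨hza, ?_⟩
          rw [ev_lin, ← hza, ← ev_split a P]
          exact h
      rw [heq] at hslicet
      refine Nat.le_of_mul_le_mul_left ?_ hq0
      rw [← hslicet]
      have hps : q^(n-S.card) = q^(n-S.card-1) * q := by
        rw [← pow_succ, ← harith2]
      calc q * ((q-1)^(S.card-1) * q^(n-S.card-1))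
          = (q-1)^(S.card-1) * q^(n-S.card) := by rw [hps]; ring
        _ ≤ _ := hIH
    have hfib : (univ.filter fun y : ι → F => ev P y = 0).card
        = ∑ t ∈ (univ : Finset F),
            ((univ.filter fun y : ι → F => ev P y = 0).filter fun z => z a = t).card :=
      Finset.card_eq_sum_card_fiberwise (f := fun z : ι → F => z a) (fun y _ => mem_univ _)
    rw [hfib]
    have hre : ∀ t : F, ((univ.filter fun y : ι → F => ev P y = 0).filter fun z => z a = t)
        = (univ.filter fun z : ι → F => z a = t ∧ ev P z = 0) := by
      intro t
      ext z
      simp only [mem_filter, mem_univ, true_and]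
      tauto
    have hps : q^(n-S.card) = q^(n-S.card-1) * q := by
      rw [← pow_succ, ← harith2]
    calc (q-1)^(S.card-1) * q^(n-S.card)
        = ∑ _t ∈ (univ : Finset F), (q-1)^(S.card-1) * q^(n-S.card-1) := by
          rw [Finset.sum_const, card_univ, hq, smul_eq_mul, hps]
          ring
      _ ≤ _ := Finset.sum_le_sum (fun t _ => by rw [hre t]; exact hmain t)

end ZCO

lemma arith_lemma (q k : ℕ) (hq : 2 ≤ q) (hk : 1 ≤ k) :
    q^k - (q-1)^k ≤ (q-1)^(k-1) * (2^k - 1) := by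
  obtain ⟨a, ha⟩ : ∃ a, q = a + 1 := ⟨q - 1, by omega⟩
  subst ha
  have ha1 : 1 ≤ a := by omega
  simp only [Nat.add_sub_cancel]
  have hbin : (a+1)^k = ∑ j ∈ Finset.range (k+1), a^j * k.choose j := by
    rw [add_pow]
    refine Finset.sum_congr rfl fun j _ => ?_
    rw [one_pow, mul_one, Nat.cast_id]
  have hsplit : (a+1)^k = (∑ j ∈ Finset.range k, a^j * k.choose j) + a^k := by
    rw [hbin, Finset.sum_range_succ, Nat.choose_self, mul_one]
  have hchoose : ∑ j ∈ Finset.range k, k.choose j = 2^k - 1 := by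
    have h := Nat.sum_range_choose k
    rw [Finset.sum_range_succ, Nat.choose_self] at h
    omega
  have hle : (∑ j ∈ Finset.range k, a^j * k.choose j) ≤ a^(k-1) * (2^k - 1) := by
    rw [← hchoose, Finset.mul_sum]
    refine Finset.sum_le_sum fun j hj => ?_
    rw [Finset.mem_range] at hj
    exact Nat.mul_le_mul_right _ (Nat.pow_le_pow_right ha1 (by omega))
  omega

/-- `q^(m-k)(q^k − (q−1)^k) ≤ q^(m-k)(q−1)^(k-1)(2^k − 1)`, and consequently the
number of zeros of a nonzero multilinear homogeneous polynomial of degree `k` in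
`m` variables over `F_q` lies between `q^(m-k)(q−1)^(k-1)` and
`q^(m-k)(q−1)^(k-1)(2^k − 1)`. -/
theorem zero_count_order (F : Type) [Field F] [Fintype F] [DecidableEq F]
    (q : ℕ) (hq : q = Fintype.card F)
    (m k : ℕ) (hk : 1 ≤ k) (hkm : k ≤ m)
    (δ : Finset (Fin m) → F)
    (hδ : ∃ I : Finset (Fin m), I.card = k ∧ δ I ≠ 0) :
    q ^ (m - k) * (q ^ k - (q - 1) ^ k)
        ≤ q ^ (m - k) * (q - 1) ^ (k - 1) * (2 ^ k - 1) ∧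
    q ^ (m - k) * (q - 1) ^ (k - 1)
        ≤ (Finset.univ.filter (fun y : Fin m → F =>
            ∑ I ∈ Finset.univ.filter (fun I : Finset (Fin m) => I.card = k),
              δ I * ∏ i ∈ I, y i = 0)).card ∧
    (Finset.univ.filter (fun y : Fin m → F =>
        ∑ I ∈ Finset.univ.filter (fun I : Finset (Fin m) => I.card = k),
          δ I * ∏ i ∈ I, y i = 0)).card
      ≤ q ^ (m - k) * (q - 1) ^ (k - 1) * (2 ^ k - 1) := by
  classical
  subst hq
  obtain ⟨q, hq⟩ : ∃ q, Fintype.card F = q := ⟨_, rfl⟩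
  rw [hq]
  have hq2 : 2 ≤ q := hq ▸ Fintype.one_lt_card
  obtain ⟨I₀, hI₀card, hI₀ne⟩ := hδ
  set P : Finset (Fin m) → F := fun I => if I.card = k then δ I else 0 with hP
  have hev : ∀ y : Fin m → F,
      (∑ I ∈ Finset.univ.filter (fun I : Finset (Fin m) => I.card = k),
        δ I * ∏ i ∈ I, y i) = ZCO.ev P y := by
    intro y
    rw [ZCO.ev, Finset.sum_filter]
    refine Finset.sum_congr rfl fun I _ => ?_
    by_cases h : I.card = k <;> simp [hP, h]
  have hset : (Finset.univ.filter (fun y : Fin m → F =>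
        ∑ I ∈ Finset.univ.filter (fun I : Finset (Fin m) => I.card = k),
          δ I * ∏ i ∈ I, y i = 0))
      = (Finset.univ.filter fun y : Fin m → F => ZCO.ev P y = 0) := by
    ext y
    simp only [mem_filter, mem_univ, true_and, hev y]
  rw [hset]
  -- support facts about P
  have hPdeg : ∀ I : Finset (Fin m), P I ≠ 0 → I.card = k := by
    intro I hI
    by_contra h
    exact hI (by simp [hP, h])
  have hPI₀ : P I₀ ≠ 0 := by
    rw [hP]
    simpa [hI₀card] using hI₀ne
  -- lower bound for zeros via zeros_lemma
  have hZlow := ZCO.zeros_lemma (univ : Finset (Fin m)) I₀ P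
    (fun I _ => (Finset.subset_univ I).trans Finset.subset_union_right)
    (fun I hI => by rw [hPdeg I hI, hI₀card])
    hPI₀ (Finset.card_pos.mp (by omega))
  rw [hq, Fintype.card_fin, hI₀card] at hZlow
  -- lower bound for nonzeros via main_lemma
  have hNZlow := ZCO.main_lemma (univ : Finset (Fin m)) k P
    (fun I _ => Finset.subset_univ I)
    (fun I hI => le_of_eq (hPdeg I hI))
    ⟨I₀, hPI₀⟩
    (by rw [Finset.card_univ, Fintype.card_fin]; exact hkm)
  rw [hq, Fintype.card_fin] at hNZlow
  -- total count
  have hsplit : (Finset.univ.filter fun y : Fin m → F => ZCO.ev P y = 0).card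
      + (Finset.univ.filter fun y : Fin m → F => ZCO.ev P y ≠ 0).card = q ^ m := by
    rw [Finset.card_filter_add_card_filter_not, Finset.card_univ,
      Fintype.card_fun, Fintype.card_fin, hq]
  -- abstract everything into plain naturals
  obtain ⟨Z, hZ⟩ : ∃ z, (Finset.univ.filter fun y : Fin m → F => ZCO.ev P y = 0).card = z :=
    ⟨_, rfl⟩
  obtain ⟨NZ, hNZ⟩ : ∃ z, (Finset.univ.filter fun y : Fin m → F => ZCO.ev P y ≠ 0).card = z :=
    ⟨_, rfl⟩
  rw [hZ]
  rw [hZ, hNZ] at hsplit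
  rw [hNZ] at hNZlow
  rw [hZ] at hZlow
  clear hset hev hPdeg hPI₀ hZ hNZ
  -- pure arithmetic from here
  have hqm : q ^ m = q ^ (m-k) * q ^ k := by
    rw [← pow_add]
    congr 1
    omega
  have hBA : (q-1)^k ≤ q^k := Nat.pow_le_pow_left (by omega) k
  have harith := arith_lemma q k hq2 hk
  refine ⟨?_, ?_, ?_⟩
  · calc q ^ (m-k) * (q^k - (q-1)^k)
        ≤ q ^ (m-k) * ((q-1)^(k-1) * (2^k-1)) := Nat.mul_le_mul_left _ harith
      _ = q ^ (m-k) * (q-1)^(k-1) * (2^k-1) := by ring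
  · calc q^(m-k) * (q-1)^(k-1) = (q-1)^(k-1) * q^(m-k) := by ring
      _ ≤ Z := hZlow
  · have hZeq : Z = q ^ m - NZ := by omega
    have hstep : q ^ m - NZ ≤ q ^ m - (q-1)^k * q^(m-k) :=
      Nat.sub_le_sub_left hNZlow _
    have hfact : q ^ m - (q-1)^k * q^(m-k) = q^(m-k) * (q^k - (q-1)^k) := by
      have h1 : q ^ m = q^(m-k) * (q-1)^k + q^(m-k) * (q^k - (q-1)^k) := by
        rw [← Nat.mul_add, Nat.add_sub_cancel' hBA, ← hqm]
      rw [h1, mul_comm ((q-1)^k) (q^(m-k)), Nat.add_sub_cancel_left]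
    calc Z = q ^ m - NZ := hZeq
      _ ≤ q ^ m - (q-1)^k * q^(m-k) := hstep
      _ = q^(m-k) * (q^k - (q-1)^k) := hfact
      _ ≤ q ^ (m-k) * ((q-1)^(k-1) * (2^k-1)) := Nat.mul_le_mul_left _ harith
      _ = q ^ (m-k) * (q-1)^(k-1) * (2^k-1) := by ring
end

section
/- Let r_1,...,r_m be independent uniformly random elements of F_q and let Q be a multilinear homogeneous polynomial of degree k ≤ m over F_q with not all coefficients zero. Then P(Q(r_1,...,r_m) = 0) ≤ 1 − (1 − 1/q)^k. -/
open Finset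

section Aux

variable {F : Type} [Field F] [Fintype F] [DecidableEq F]

def polyQ (ι : Type) [Fintype ι] [DecidableEq ι] (k : ℕ) (δ : Finset ι → F)
    (y : ι → F) : F :=
  ∑ I ∈ Finset.univ.filter (fun I : Finset ι => I.card = k), δ I * ∏ j ∈ I, y j

lemma lin_count (a b : F) (ha : a ≠ 0) :
    Fintype.card F - 1 ≤ (univ.filter (fun t : F => t * a + b ≠ 0)).card := by
  have h1 : (univ.filter (fun t : F => ¬(t * a + b ≠ 0))).card ≤ 1 := by
    refine Finset.card_le_one.mpr ?_
    intro x hx y hy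
    simp only [mem_filter, not_not] at hx hy
    have : x * a = y * a := by
      have := hx.2.trans hy.2.symm
      linear_combination this
    exact mul_right_cancel₀ ha this
  have h2 := Finset.card_filter_add_card_filter_not
    (s := (univ : Finset F)) (p := fun t : F => t * a + b ≠ 0)
  rw [Finset.card_univ] at h2
  omega

variable {ι : Type} [Fintype ι] [DecidableEq ι]

def deltaSub (δ : Finset ι → F) (i : ι) (J : Finset {j : ι // j ≠ i}) : F :=
  δ (insert i (J.map (Function.Embedding.subtype _)))

lemma sum_reindex (δ : Finset ι → F) (i : ι) (k : ℕ) (f : ι → F) :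
    ∑ I ∈ univ.filter (fun I : Finset ι => I.card = k + 1 ∧ i ∈ I),
        δ I * ∏ j ∈ I.erase i, f j =
      ∑ J ∈ univ.filter (fun J : Finset {j : ι // j ≠ i} => J.card = k),
        deltaSub δ i J * ∏ j ∈ J, f j.1 := by
  refine Finset.sum_nbij' (fun I => (I.erase i).subtype (· ≠ i))
    (fun J => insert i (J.map (Function.Embedding.subtype _))) ?_ ?_ ?_ ?_ ?_
  · intro I hI
    simp only [mem_filter, mem_univ, true_and] at hI ⊢
    rw [Finset.card_subtype, Finset.filter_true_of_mem (fun x hx => Finset.ne_of_mem_erase hx),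
      Finset.card_erase_of_mem hI.2, hI.1]
    omega
  · intro J hJ
    simp only [mem_filter, mem_univ, true_and] at hJ ⊢
    have hni : i ∉ J.map (Function.Embedding.subtype _) := by
      simp
    refine ⟨?_, Finset.mem_insert_self _ _⟩
    rw [Finset.card_insert_of_notMem hni, Finset.card_map, hJ]
  · intro I hI
    simp only [mem_filter, mem_univ, true_and] at hI
    rw [Finset.subtype_map_of_mem (fun x hx => Finset.ne_of_mem_erase hx),
      Finset.insert_erase hI.2]
  · intro J hJ
    have hni : i ∉ J.map (Function.Embedding.subtype _) := by simp
    rw [Finset.erase_insert hni]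
    ext x
    simp only [Finset.mem_subtype, Finset.mem_map, Function.Embedding.coe_subtype]
    constructor
    · rintro ⟨a, ha, hax⟩
      rwa [show a = x from Subtype.ext hax] at ha
    · intro hx
      exact ⟨x, hx, rfl⟩
  · intro I hI
    simp only [mem_filter, mem_univ, true_and] at hI
    rw [deltaSub, Finset.subtype_map_of_mem (fun x hx => Finset.ne_of_mem_erase hx),
      Finset.insert_erase hI.2]
    congr 1
    conv_lhs => rw [← Finset.subtype_map_of_mem
      (fun x hx => Finset.ne_of_mem_erase hx) (s := I.erase i)]
    rw [Finset.prod_map]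
    rfl

lemma polyQ_eq (k : ℕ) (δ : Finset ι → F) (i : ι) (t : F) (y' : {j : ι // j ≠ i} → F) :
    polyQ ι (k + 1) δ ((Equiv.funSplitAt i F).symm (t, y')) =
      t * polyQ {j : ι // j ≠ i} k (deltaSub δ i) y' +
      ∑ I ∈ univ.filter (fun I : Finset ι => I.card = k + 1 ∧ i ∉ I),
        δ I * ∏ j ∈ I, ((Equiv.funSplitAt i F).symm (0, y')) j := by
  set y := (Equiv.funSplitAt i F).symm (t, y') with hy
  have hyi : y i = t := by simp [hy]
  have hyj : ∀ (j : ι) (h : j ≠ i), y j = y' ⟨j, h⟩ := by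
    intro j h
    simp [hy, h]
  simp only [polyQ]
  rw [← Finset.sum_filter_add_sum_filter_not
    (univ.filter (fun I : Finset ι => I.card = k + 1)) (fun I => i ∈ I), Finset.filter_filter,
    Finset.filter_filter]
  congr 1
  · calc ∑ I ∈ filter (fun I : Finset ι => I.card = k + 1 ∧ i ∈ I) univ, δ I * ∏ j ∈ I, y j
        = ∑ I ∈ filter (fun I : Finset ι => I.card = k + 1 ∧ i ∈ I) univ,
            t * (δ I * ∏ j ∈ I.erase i, y j) := by
          refine Finset.sum_congr rfl fun I hI => ?_
          simp only [mem_filter, mem_univ, true_and] at hI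
          rw [← Finset.mul_prod_erase I y hI.2, hyi]
          ring
      _ = t * ∑ I ∈ filter (fun I : Finset ι => I.card = k + 1 ∧ i ∈ I) univ,
            δ I * ∏ j ∈ I.erase i, y j := (Finset.mul_sum _ _ _).symm
      _ = t * ∑ J ∈ filter (fun J : Finset {j : ι // j ≠ i} => J.card = k) univ,
            deltaSub δ i J * ∏ j ∈ J, y j.1 := by rw [sum_reindex]
      _ = t * ∑ J ∈ filter (fun J : Finset {j : ι // j ≠ i} => J.card = k) univ,
            deltaSub δ i J * ∏ j ∈ J, y' j := by
          congr 1
          refine Finset.sum_congr rfl fun J _ => ?_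
          congr 1
          exact Finset.prod_congr rfl fun j _ => hyj j.1 j.2
  · refine Finset.sum_congr rfl ?_
    intro I hI
    simp only [mem_filter, mem_univ, true_and] at hI
    congr 1
    refine Finset.prod_congr rfl ?_
    intro j hj
    have h : j ≠ i := fun h => hI.2 (h ▸ hj)
    rw [hyj j h]
    simp [h]


set_option linter.unusedSectionVars false

lemma count_ge (k : ℕ) (δ : Finset ι → F) (i : ι) :
    (Fintype.card F - 1) *
        (univ.filter (fun y' : {j : ι // j ≠ i} → F =>
          polyQ {j : ι // j ≠ i} k (deltaSub δ i) y' ≠ 0)).card ≤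
      (univ.filter (fun y : ι → F => polyQ ι (k + 1) δ y ≠ 0)).card := by
  classical
  set ι' := {j : ι // j ≠ i}
  set A : (ι' → F) → F := fun y' => polyQ ι' k (deltaSub δ i) y' with hA
  set B : (ι' → F) → F := fun y' =>
    ∑ I ∈ univ.filter (fun I : Finset ι => I.card = k + 1 ∧ i ∉ I),
      δ I * ∏ j ∈ I, ((Equiv.funSplitAt i F).symm (0, y')) j with hB
  have hQ : ∀ (t : F) (y' : ι' → F),
      polyQ ι (k + 1) δ ((Equiv.funSplitAt i F).symm (t, y')) = t * A y' + B y' :=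
    fun t y' => polyQ_eq k δ i t y'
  have step1 : (univ.filter (fun y : ι → F => polyQ ι (k + 1) δ y ≠ 0)).card =
      ∑ p : F × (ι' → F), if polyQ ι (k + 1) δ ((Equiv.funSplitAt i F).symm p) ≠ 0
        then 1 else 0 := by
    rw [Finset.card_filter]
    exact (Equiv.sum_comp (Equiv.funSplitAt i F).symm
      (fun y => if polyQ ι (k + 1) δ y ≠ 0 then 1 else 0)).symm
  rw [step1]
  rw [Fintype.sum_prod_type]
  rw [Finset.sum_comm]
  have step2 : ∀ y' : ι' → F, A y' ≠ 0 →
      Fintype.card F - 1 ≤ ∑ t : F,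
        if polyQ ι (k + 1) δ ((Equiv.funSplitAt i F).symm (t, y')) ≠ 0 then 1 else 0 := by
    intro y' hy'
    have : (∑ t : F, if polyQ ι (k + 1) δ ((Equiv.funSplitAt i F).symm (t, y')) ≠ 0
        then 1 else 0) = (univ.filter (fun t : F => t * A y' + B y' ≠ 0)).card := by
      rw [Finset.card_filter]
      exact Finset.sum_congr rfl fun t _ => by rw [hQ]
    rw [this]
    exact lin_count (A y') (B y') hy'
  calc (Fintype.card F - 1) *
        (univ.filter (fun y' : ι' → F => A y' ≠ 0)).card
      = ∑ y' ∈ univ.filter (fun y' : ι' → F => A y' ≠ 0), (Fintype.card F - 1) := by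
        rw [Finset.sum_const, smul_eq_mul, mul_comm]
    _ ≤ ∑ y' ∈ univ.filter (fun y' : ι' → F => A y' ≠ 0),
          ∑ t : F, if polyQ ι (k + 1) δ ((Equiv.funSplitAt i F).symm (t, y')) ≠ 0
            then 1 else 0 := by
        refine Finset.sum_le_sum fun y' hy' => ?_
        exact step2 y' (Finset.mem_filter.mp hy').2
    _ ≤ ∑ y' : ι' → F, ∑ t : F,
          if polyQ ι (k + 1) δ ((Equiv.funSplitAt i F).symm (t, y')) ≠ 0
            then 1 else 0 := by
        refine Finset.sum_le_sum_of_subset_of_nonneg (Finset.filter_subset _ _) ?_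
        intro y' _ _
        positivity

lemma card_sub (i : ι) : Fintype.card {j : ι // j ≠ i} = Fintype.card ι - 1 := by
  simp [Fintype.card_subtype_compl]

lemma key : ∀ (k : ℕ) (ι : Type) [Fintype ι] [DecidableEq ι] (δ : Finset ι → F),
    (∃ I : Finset ι, I.card = k + 1 ∧ δ I ≠ 0) → k + 1 ≤ Fintype.card ι →
    (Fintype.card F - 1) ^ (k + 1) * Fintype.card F ^ (Fintype.card ι - (k + 1)) ≤
      (univ.filter (fun y : ι → F => polyQ ι (k + 1) δ y ≠ 0)).card := by
  intro k
  induction k with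
  | zero =>
    intro ι _ _ δ ⟨I₀, hI₀c, hI₀⟩ hcard
    obtain ⟨i, rfl⟩ := Finset.card_eq_one.mp hI₀c
    refine le_trans ?_ (count_ge 0 δ i)
    have hconst : ∀ y' : {j : ι // j ≠ i} → F, polyQ _ 0 (deltaSub δ i) y' = δ {i} := by
      intro y'
      rw [polyQ, show (univ.filter (fun J : Finset {j : ι // j ≠ i} => J.card = 0)) = {∅} by
        ext J; simp [Finset.card_eq_zero]]
      simp [deltaSub]
    have hfull : (univ.filter (fun y' : {j : ι // j ≠ i} → F =>
        polyQ _ 0 (deltaSub δ i) y' ≠ 0)) = univ := by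
      refine Finset.filter_true_of_mem fun y' _ => ?_
      rw [hconst]; exact hI₀
    rw [hfull, Finset.card_univ, Fintype.card_fun, card_sub, pow_one]
  | succ k ih =>
    intro ι _ _ δ ⟨I₀, hI₀c, hI₀⟩ hcard
    have hpos : 0 < I₀.card := by omega
    obtain ⟨i, hi⟩ := Finset.card_pos.mp hpos
    have hJc : ((I₀.erase i).subtype (· ≠ i)).card = k + 1 := by
      rw [Finset.card_subtype, Finset.filter_true_of_mem (fun x hx => Finset.ne_of_mem_erase hx),
        Finset.card_erase_of_mem hi, hI₀c]
      omega
    have hJδ : deltaSub δ i ((I₀.erase i).subtype (· ≠ i)) ≠ 0 := by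
      rw [deltaSub, Finset.subtype_map_of_mem (fun x hx => Finset.ne_of_mem_erase hx),
        Finset.insert_erase hi]
      exact hI₀
    have hc' : k + 1 + 1 ≤ Fintype.card ι := hcard
    have hcard' : k + 1 ≤ Fintype.card {j : ι // j ≠ i} := by
      rw [card_sub]; omega
    have hIH := ih {j : ι // j ≠ i} (deltaSub δ i) ⟨_, hJc, hJδ⟩ hcard'
    refine le_trans ?_ (count_ge (k + 1) δ i)
    calc (Fintype.card F - 1) ^ (k + 1 + 1) *
          Fintype.card F ^ (Fintype.card ι - (k + 1 + 1))
        = (Fintype.card F - 1) * ((Fintype.card F - 1) ^ (k + 1) *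
            Fintype.card F ^ (Fintype.card {j : ι // j ≠ i} - (k + 1))) := by
          rw [card_sub]
          rw [show Fintype.card ι - 1 - (k + 1) = Fintype.card ι - (k + 1 + 1) by omega]
          ring
      _ ≤ (Fintype.card F - 1) *
            (univ.filter (fun y' : {j : ι // j ≠ i} → F =>
              polyQ _ (k + 1) (deltaSub δ i) y' ≠ 0)).card :=
          Nat.mul_le_mul_left _ hIH

end Aux

/-- For i.i.d. uniform `r₁,…,r_m` in `F_q` and a nonzero multilinear homogeneous
polynomial `Q` of degree `k ≤ m`, `P(Q(r) = 0) = #Z/q^m ≤ 1 − (1 − 1/q)^k`. -/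
theorem prob_zero_upper (F : Type) [Field F] [Fintype F] [DecidableEq F]
    (q : ℕ) (hq : q = Fintype.card F)
    (m k : ℕ) (hk : 1 ≤ k) (hkm : k ≤ m)
    (δ : Finset (Fin m) → F)
    (hδ : ∃ I : Finset (Fin m), I.card = k ∧ δ I ≠ 0) :
    ((Finset.univ.filter (fun y : Fin m → F =>
        ∑ I ∈ Finset.univ.filter (fun I : Finset (Fin m) => I.card = k),
          δ I * ∏ i ∈ I, y i = 0)).card : ℝ) / (q : ℝ) ^ m
      ≤ 1 - (1 - 1 / (q : ℝ)) ^ k := by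
  obtain ⟨k', rfl⟩ : ∃ k', k = k' + 1 := ⟨k - 1, by omega⟩
  have hq1 : 1 ≤ q := by
    rw [hq]; exact Fintype.card_pos
  have ha : (0 : ℝ) < (q : ℝ) := by exact_mod_cast hq1
  have hapow : (0 : ℝ) < (q : ℝ) ^ m := by positivity
  have hkey := key (F := F) k' (Fin m) δ hδ (by rw [Fintype.card_fin]; exact hkm)
  rw [Fintype.card_fin, ← hq] at hkey
  set M := (univ.filter (fun y : Fin m → F => polyQ (Fin m) (k' + 1) δ y ≠ 0)).card with hMdef
  have hNM : (univ.filter (fun y : Fin m → F => polyQ (Fin m) (k' + 1) δ y = 0)).card + M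
      = q ^ m := by
    have h := Finset.card_filter_add_card_filter_not
      (s := (univ : Finset (Fin m → F)))
      (p := fun y : Fin m → F => polyQ (Fin m) (k' + 1) δ y = 0)
    rw [Finset.card_univ, Fintype.card_fun, Fintype.card_fin, ← hq] at h
    convert h using 3
  have hNMreal : (((univ.filter (fun y : Fin m → F =>
      polyQ (Fin m) (k' + 1) δ y = 0)).card : ℝ)) = (q : ℝ) ^ m - M := by
    have := congrArg (fun n : ℕ => (n : ℝ)) hNM
    push_cast at this
    linarith
  have hsub : ((q - 1 : ℕ) : ℝ) = (q : ℝ) - 1 := by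
    push_cast [Nat.cast_sub hq1]; ring
  have hone : (1 - 1 / (q : ℝ)) = ((q : ℝ) - 1) / q := by field_simp
  have key2 : (1 - 1 / (q : ℝ)) ^ (k' + 1) * (q : ℝ) ^ m ≤ M := by
    have heq : (1 - 1 / (q : ℝ)) ^ (k' + 1) * (q : ℝ) ^ m
        = ((q - 1 : ℕ) : ℝ) ^ (k' + 1) * ((q : ℕ) : ℝ) ^ (m - (k' + 1)) := by
      rw [hone, hsub, div_pow]
      rw [show (q : ℝ) ^ m = (q : ℝ) ^ (k' + 1) * (q : ℝ) ^ (m - (k' + 1)) by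
        rw [← pow_add]; congr 1; omega]
      field_simp
    rw [heq]
    exact_mod_cast hkey
  show (((univ.filter (fun y : Fin m → F =>
      polyQ (Fin m) (k' + 1) δ y = 0)).card : ℝ)) / (q : ℝ) ^ m
      ≤ 1 - (1 - 1 / (q : ℝ)) ^ (k' + 1)
  rw [hNMreal, sub_div, div_self (ne_of_gt hapow)]
  have : (1 - 1 / (q : ℝ)) ^ (k' + 1) ≤ (M : ℝ) / (q : ℝ) ^ m :=
    (le_div_iff₀ hapow).mpr key2
  linarith
end

section
/- Let r_1,...,r_m be independent uniformly random elements of F_q and let Q be a multilinear homogeneous polynomial of degree k ≤ m over F_q with not all coefficients zero. Then P(Q(r_1,...,r_m) = 0) ≥ (1/q)·(1 − 1/q)^{k-1}. -/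
open Finset

namespace ProbZeroAux

variable {F : Type} [Field F] [Fintype F] [DecidableEq F] {m : ℕ}

/-- Evaluation of a multilinear polynomial given by coefficients `δ`. -/
def meval (δ : Finset (Fin m) → F) (y : Fin m → F) : F :=
  ∑ I : Finset (Fin m), δ I * ∏ i ∈ I, y i

/-- Coefficients of the "derivative" w.r.t. variable `j`. -/
def lower (j : Fin m) (δ : Finset (Fin m) → F) : Finset (Fin m) → F :=
  fun J => if j ∈ J then 0 else δ (insert j J)

/-- Coefficients of the part not involving variable `j`. -/
def rest (j : Fin m) (δ : Finset (Fin m) → F) : Finset (Fin m) → F :=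
  fun I => if j ∈ I then 0 else δ I

lemma meval_indep (j : Fin m) (δ : Finset (Fin m) → F)
    (h : ∀ I, j ∈ I → δ I = 0) (y : Fin m → F) (c : F) :
    meval δ (Function.update y j c) = meval δ y := by
  unfold meval
  refine Finset.sum_congr rfl fun I _ => ?_
  by_cases hj : j ∈ I
  · simp [h I hj]
  · congr 1
    refine Finset.prod_congr rfl fun i hi => ?_
    have hne : i ≠ j := fun e => hj (e ▸ hi)
    simp [Function.update_of_ne hne]

lemma lower_indep (j : Fin m) (δ : Finset (Fin m) → F) (y : Fin m → F) (c : F) :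
    meval (lower j δ) (Function.update y j c) = meval (lower j δ) y :=
  meval_indep j _ (fun I hI => by simp [lower, hI]) y c

lemma rest_indep (j : Fin m) (δ : Finset (Fin m) → F) (y : Fin m → F) (c : F) :
    meval (rest j δ) (Function.update y j c) = meval (rest j δ) y :=
  meval_indep j _ (fun I hI => by simp [rest, hI]) y c

lemma meval_decomp (j : Fin m) (δ : Finset (Fin m) → F) (y : Fin m → F) :
    meval δ y = y j * meval (lower j δ) y + meval (rest j δ) y := by
  have h1 : meval (lower j δ) y
      = ∑ J ∈ univ.filter (fun J : Finset (Fin m) => j ∉ J),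
          δ (insert j J) * ∏ i ∈ J, y i := by
    unfold meval lower
    rw [Finset.sum_filter]
    refine Finset.sum_congr rfl fun J _ => ?_
    by_cases hj : j ∈ J <;> simp [hj]
  have h2 : meval (rest j δ) y
      = ∑ I ∈ univ.filter (fun I : Finset (Fin m) => j ∉ I),
          δ I * ∏ i ∈ I, y i := by
    unfold meval rest
    rw [Finset.sum_filter]
    refine Finset.sum_congr rfl fun J _ => ?_
    by_cases hj : j ∈ J <;> simp [hj]
  have h3 : y j * meval (lower j δ) y
      = ∑ I ∈ univ.filter (fun I : Finset (Fin m) => j ∈ I),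
          δ I * ∏ i ∈ I, y i := by
    rw [h1, Finset.mul_sum]
    refine Finset.sum_nbij' (i := fun J => insert j J) (j := fun I => I.erase j)
      ?_ ?_ ?_ ?_ ?_
    · intro J hJ; simp
    · intro I hI; simp
    · intro J hJ; simp only [mem_filter, mem_univ, true_and] at hJ
      exact Finset.erase_insert hJ
    · intro I hI; simp only [mem_filter, mem_univ, true_and] at hI
      exact Finset.insert_erase hI
    · intro J hJ; simp only [mem_filter, mem_univ, true_and] at hJ
      rw [Finset.prod_insert hJ]
      ring
  rw [h2, h3, Finset.sum_filter_add_sum_filter_not]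
  rfl

lemma count_update (j : Fin m) (P : (Fin m → F) → Prop) [DecidablePred P]
    (φ : (Fin m → F) → F)
    (hP : ∀ y c, P (Function.update y j c) ↔ P y)
    (hφ : ∀ y c, φ (Function.update y j c) = φ y) :
    (univ.filter fun y : Fin m → F => P y ∧ y j = φ y).card * Fintype.card F
      = (univ.filter fun y : Fin m → F => P y).card := by
  rw [← Finset.card_univ (α := F), ← Finset.card_product]
  refine (Finset.card_nbij' (i := fun p : (Fin m → F) × F => Function.update p.1 j p.2)
    (j := fun y => (Function.update y j (φ y), y j)) ?_ ?_ ?_ ?_).symm.symm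
  all_goals try skip
  · intro p hp
    simp only [Finset.mem_coe, Finset.mem_product, mem_filter, mem_univ, true_and] at hp
    simp only [Finset.mem_coe, mem_filter, mem_univ, true_and]
    rw [hP]; exact hp.1.1
  · intro y hy
    simp only [Finset.mem_coe, mem_filter, mem_univ, true_and] at hy
    simp only [Finset.mem_coe, Finset.mem_product, mem_filter, mem_univ, true_and, Finset.mem_univ,
      and_true]
    constructor
    · rw [hP]; exact hy
    · rw [Function.update_self, hφ]
  · intro p hp
    simp only [Finset.mem_coe, Finset.mem_product, mem_filter, mem_univ, true_and] at hp
    obtain ⟨⟨hp1, hp2⟩, -⟩ := hp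
    show (Function.update (Function.update p.1 j p.2) j (φ (Function.update p.1 j p.2)),
      (Function.update p.1 j p.2) j) = p
    rw [hφ, Function.update_idem, Function.update_self, ← hp2, Function.update_eq_self]
  · intro y hy
    show Function.update (Function.update y j (φ y)) j (y j) = y
    rw [Function.update_idem, Function.update_eq_self]

lemma card_univ_fun : (univ : Finset (Fin m → F)).card = Fintype.card F ^ m := by
  rw [Finset.card_univ, Fintype.card_fun, Fintype.card_fin]


lemma const_case (δ : Finset (Fin m) → F) (h0 : ∀ I, δ I ≠ 0 → I = ∅)
    (hne : ∃ I, δ I ≠ 0) :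
    (univ.filter fun y : Fin m → F => meval δ y ≠ 0) = univ := by
  obtain ⟨I₀, hI₀⟩ := hne
  have hI0 : I₀ = ∅ := h0 I₀ hI₀
  subst hI0
  refine Finset.filter_true_of_mem fun y _ => ?_
  have : meval δ y = δ ∅ := by
    unfold meval
    rw [Finset.sum_eq_single ∅]
    · simp
    · intro I _ hIne
      have : δ I = 0 := by
        by_contra h
        exact hIne (h0 I h)
      simp [this]
    · simp
  rw [this]; exact hI₀

/-- Key lemma: a nonzero multilinear polynomial of degree `≤ d` is nonzero on at
least a `(1-1/q)^d` fraction of points. -/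
lemma key (d : ℕ) (δ : Finset (Fin m) → F)
    (hdeg : ∀ I, δ I ≠ 0 → I.card ≤ d) (hne : ∃ I, δ I ≠ 0) :
    ((Fintype.card F : ℝ) - 1) ^ d * (Fintype.card F : ℝ) ^ m
      ≤ (Fintype.card F : ℝ) ^ d
        * ((univ.filter fun y : Fin m → F => meval δ y ≠ 0).card : ℝ) := by
  induction d generalizing δ with
  | zero =>
    rw [const_case δ (fun I hI => Finset.card_eq_zero.mp (Nat.le_zero.mp (hdeg I hI))) hne,
      card_univ_fun]
    simp
  | succ d ih =>
    have hq1 : (1 : ℝ) ≤ (Fintype.card F : ℝ) := by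
      exact_mod_cast Fintype.card_pos
    have hq0 : (0 : ℝ) < (Fintype.card F : ℝ) := lt_of_lt_of_le one_pos hq1
    by_cases hc : ∃ I, δ I ≠ 0 ∧ I.Nonempty
    · obtain ⟨I₀, hI₀, hI₀ne⟩ := hc
      obtain ⟨j, hj⟩ := hI₀ne
      set g := lower j δ with hg
      have hdeg' : ∀ J, g J ≠ 0 → J.card ≤ d := by
        intro J hJ
        have hjJ : j ∉ J := by
          intro h; apply hJ; simp [hg, lower, h]
        have hδJ : δ (insert j J) ≠ 0 := by
          intro h; apply hJ; simp [hg, lower, hjJ, h]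
        have := hdeg _ hδJ
        rw [Finset.card_insert_of_notMem hjJ] at this
        omega
      have hne' : ∃ J, g J ≠ 0 := by
        refine ⟨I₀.erase j, ?_⟩
        have hjE : j ∉ I₀.erase j := Finset.notMem_erase _ _
        simp only [hg, lower, hjE, if_false]
        rw [Finset.insert_erase hj]
        exact hI₀
      have ihg := ih g hdeg' hne'
      -- counting
      set φ : (Fin m → F) → F := fun y => -(meval (rest j δ) y) / meval g y with hφdef
      have hPind : ∀ (y : Fin m → F) (c : F),
          (meval g (Function.update y j c) ≠ 0) ↔ meval g y ≠ 0 := by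
        intro y c; rw [lower_indep]
      have hφind : ∀ (y : Fin m → F) (c : F),
          φ (Function.update y j c) = φ y := by
        intro y c; simp only [hφdef, hg, lower_indep, rest_indep]
      have hcount := count_update j (fun y => meval g y ≠ 0) φ hPind hφind
      have hset : (univ.filter fun y : Fin m → F => meval g y ≠ 0 ∧ y j = φ y)
          = univ.filter fun y : Fin m → F => meval g y ≠ 0 ∧ meval δ y = 0 := by
        refine Finset.filter_congr fun y _ => ?_
        have hdec : meval δ y = y j * meval g y + meval (rest j δ) y := by
          rw [hg]; exact meval_decomp j δ y
        constructor
        · rintro ⟨hgy, hyj⟩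
          refine ⟨hgy, ?_⟩
          rw [hdec, hyj]
          simp only [hφdef]
          rw [div_mul_cancel₀ _ hgy]
          ring
        · rintro ⟨hgy, hfy⟩
          refine ⟨hgy, ?_⟩
          rw [hdec] at hfy
          show y j = -meval (rest j δ) y / meval g y
          rw [eq_div_iff hgy]
          linear_combination hfy
      have hcount' : (univ.filter fun y : Fin m → F =>
            meval g y ≠ 0 ∧ meval δ y = 0).card * Fintype.card F
          = (univ.filter fun y : Fin m → F => meval g y ≠ 0).card := by
        rw [← hset]; exact hcount
      -- partition
      have hsplit : (univ.filter fun y : Fin m → F => meval g y ≠ 0 ∧ meval δ y = 0).card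
          + (univ.filter fun y : Fin m → F => meval g y ≠ 0 ∧ meval δ y ≠ 0).card
          = (univ.filter fun y : Fin m → F => meval g y ≠ 0).card := by
        rw [← Finset.filter_filter, ← Finset.filter_filter]
        exact Finset.card_filter_add_card_filter_not
          (p := fun y => meval δ y = 0)
      have hsub : (univ.filter fun y : Fin m → F => meval g y ≠ 0 ∧ meval δ y ≠ 0).card
          ≤ (univ.filter fun y : Fin m → F => meval δ y ≠ 0).card := by
        apply Finset.card_le_card
        intro y hy
        simp only [mem_filter, mem_univ, true_and] at hy ⊢
        exact hy.2
      -- arithmetic, in ℝ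
      have hab : ((univ.filter fun y : Fin m → F =>
            meval g y ≠ 0 ∧ meval δ y = 0).card : ℝ)
          + ((univ.filter fun y : Fin m → F =>
            meval g y ≠ 0 ∧ meval δ y ≠ 0).card : ℝ)
          = ((univ.filter fun y : Fin m → F => meval g y ≠ 0).card : ℝ) := by
        exact_mod_cast hsplit
      have haq : ((univ.filter fun y : Fin m → F =>
            meval g y ≠ 0 ∧ meval δ y = 0).card : ℝ) * (Fintype.card F : ℝ)
          = ((univ.filter fun y : Fin m → F => meval g y ≠ 0).card : ℝ) := by
        exact_mod_cast hcount'
      have hbN : ((univ.filter fun y : Fin m → F =>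
            meval g y ≠ 0 ∧ meval δ y ≠ 0).card : ℝ)
          ≤ ((univ.filter fun y : Fin m → F => meval δ y ≠ 0).card : ℝ) := by
        exact_mod_cast hsub
      set q : ℝ := (Fintype.card F : ℝ) with hqdef
      set a : ℝ := ((univ.filter fun y : Fin m → F =>
        meval g y ≠ 0 ∧ meval δ y = 0).card : ℝ) with hadef
      set b : ℝ := ((univ.filter fun y : Fin m → F =>
        meval g y ≠ 0 ∧ meval δ y ≠ 0).card : ℝ) with hbdef
      set c : ℝ := ((univ.filter fun y : Fin m → F => meval g y ≠ 0).card : ℝ) with hcdef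
      set N : ℝ := ((univ.filter fun y : Fin m → F => meval δ y ≠ 0).card : ℝ) with hNdef
      have hqm : (0:ℝ) ≤ q ^ m := by positivity
      calc (q - 1) ^ (d + 1) * q ^ m
          = (q - 1) * ((q - 1) ^ d * q ^ m) := by ring
        _ ≤ (q - 1) * (q ^ d * c) := by
            apply mul_le_mul_of_nonneg_left ihg (by linarith)
        _ = q ^ d * (q * c - c) := by ring
        _ = q ^ d * (q * c - a * q) := by rw [haq]
        _ = q ^ (d+1) * (c - a) := by ring
        _ = q ^ (d+1) * b := by rw [← hab]; ring
        _ ≤ q ^ (d+1) * N := by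
            apply mul_le_mul_of_nonneg_left hbN (by positivity)
    · push_neg at hc
      rw [const_case δ (fun I hI => hc I hI) hne,
        card_univ_fun]
      push_cast
      have h1 : (Fintype.card F : ℝ) - 1 ≤ (Fintype.card F : ℝ) := by linarith
      have h2 : ((Fintype.card F : ℝ) - 1) ^ (d+1) ≤ (Fintype.card F : ℝ) ^ (d+1) :=
        pow_le_pow_left₀ (by linarith) h1 _
      have hqm : (0:ℝ) ≤ (Fintype.card F : ℝ) ^ m := by positivity
      calc ((Fintype.card F : ℝ) - 1) ^ (d+1) * (Fintype.card F : ℝ) ^ m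
          ≤ (Fintype.card F : ℝ) ^ (d+1) * (Fintype.card F : ℝ) ^ m :=
            mul_le_mul_of_nonneg_right h2 hqm
        _ = _ := by ring

end ProbZeroAux

/-- For i.i.d. uniform `r₁,…,r_m` in `F_q` and a nonzero multilinear homogeneous
polynomial `Q` of degree `k ≤ m`, `P(Q(r) = 0) = #Z/q^m ≥ (1/q)(1 − 1/q)^(k-1)`. -/
theorem prob_zero_lower (F : Type) [Field F] [Fintype F] [DecidableEq F]
    (q : ℕ) (hq : q = Fintype.card F)
    (m k : ℕ) (hk : 1 ≤ k) (hkm : k ≤ m)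
    (δ : Finset (Fin m) → F)
    (hδ : ∃ I : Finset (Fin m), I.card = k ∧ δ I ≠ 0) :
    (1 / (q : ℝ)) * (1 - 1 / (q : ℝ)) ^ (k - 1)
      ≤ ((Finset.univ.filter (fun y : Fin m → F =>
          ∑ I ∈ Finset.univ.filter (fun I : Finset (Fin m) => I.card = k),
            δ I * ∏ i ∈ I, y i = 0)).card : ℝ) / (q : ℝ) ^ m := by
  classical
  open ProbZeroAux in
  obtain ⟨e, rfl⟩ : ∃ e, k = e + 1 := ⟨k - 1, (Nat.succ_pred_eq_of_pos hk).symm⟩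
  simp only [Nat.add_sub_cancel]
  obtain ⟨I₀, hI₀k, hI₀⟩ := hδ
  set δ' : Finset (Fin m) → F := fun I => if I.card = e + 1 then δ I else 0 with hδ'
  have hQ : ∀ y : Fin m → F,
      (∑ I ∈ Finset.univ.filter (fun I : Finset (Fin m) => I.card = e + 1),
        δ I * ∏ i ∈ I, y i) = meval δ' y := by
    intro y
    unfold meval
    rw [Finset.sum_filter]
    refine Finset.sum_congr rfl fun I _ => ?_
    by_cases h : I.card = e + 1 <;> simp [hδ', h]
  have hfilter : (Finset.univ.filter (fun y : Fin m → F =>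
        ∑ I ∈ Finset.univ.filter (fun I : Finset (Fin m) => I.card = e + 1),
          δ I * ∏ i ∈ I, y i = 0))
      = Finset.univ.filter (fun y : Fin m → F => meval δ' y = 0) := by
    refine Finset.filter_congr fun y _ => ?_
    rw [hQ y]
  rw [hfilter]
  -- pick a variable in I₀
  have hI₀ne : I₀.Nonempty := Finset.card_pos.mp (by omega)
  obtain ⟨j, hj⟩ := hI₀ne
  set g : Finset (Fin m) → F := lower j δ' with hg
  have hδ'I₀ : δ' I₀ ≠ 0 := by simp only [hδ', hI₀k, if_true]; exact hI₀
  have hdeg : ∀ J, g J ≠ 0 → J.card ≤ e := by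
    intro J hJ
    have hjJ : j ∉ J := by
      intro h; apply hJ; simp [hg, lower, h]
    have hδJ : δ' (insert j J) ≠ 0 := by
      intro h; apply hJ; simp [hg, lower, hjJ, h]
    have hcardk : (insert j J).card = e + 1 := by
      by_contra h; exact hδJ (by simp [hδ', h])
    rw [Finset.card_insert_of_notMem hjJ] at hcardk
    omega
  have hne : ∃ J, g J ≠ 0 := by
    refine ⟨I₀.erase j, ?_⟩
    have hjE : j ∉ I₀.erase j := Finset.notMem_erase _ _
    simp only [hg, lower, hjE, if_false]
    rw [Finset.insert_erase hj]
    exact hδ'I₀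
  have hkey := key e g hdeg hne
  -- counting step
  set φ : (Fin m → F) → F := fun y => -(meval (rest j δ') y) / meval g y with hφdef
  have hPind : ∀ (y : Fin m → F) (c : F),
      (meval g (Function.update y j c) ≠ 0) ↔ meval g y ≠ 0 := by
    intro y c; rw [hg, lower_indep]
  have hφind : ∀ (y : Fin m → F) (c : F), φ (Function.update y j c) = φ y := by
    intro y c; simp only [hφdef, hg, lower_indep, rest_indep]
  have hcount := count_update j (fun y => meval g y ≠ 0) φ hPind hφind
  have hset : (univ.filter fun y : Fin m → F => meval g y ≠ 0 ∧ y j = φ y)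
      = univ.filter fun y : Fin m → F => meval g y ≠ 0 ∧ meval δ' y = 0 := by
    refine Finset.filter_congr fun y _ => ?_
    have hdec : meval δ' y = y j * meval g y + meval (rest j δ') y := by
      rw [hg]; exact meval_decomp j δ' y
    constructor
    · rintro ⟨hgy, hyj⟩
      refine ⟨hgy, ?_⟩
      rw [hdec, hyj]
      simp only [hφdef]
      rw [div_mul_cancel₀ _ hgy]
      ring
    · rintro ⟨hgy, hfy⟩
      refine ⟨hgy, ?_⟩
      rw [hdec] at hfy
      show y j = -meval (rest j δ') y / meval g y
      rw [eq_div_iff hgy]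
      linear_combination hfy
  have hcount' : (univ.filter fun y : Fin m → F =>
        meval g y ≠ 0 ∧ meval δ' y = 0).card * Fintype.card F
      = (univ.filter fun y : Fin m → F => meval g y ≠ 0).card := by
    rw [← hset]; exact hcount
  have hsub : (univ.filter fun y : Fin m → F => meval g y ≠ 0 ∧ meval δ' y = 0).card
      ≤ (univ.filter fun y : Fin m → F => meval δ' y = 0).card := by
    apply Finset.card_le_card
    intro y hy
    simp only [mem_filter, mem_univ, true_and] at hy ⊢
    exact hy.2
  -- final arithmetic over ℝ
  rw [hq]
  have hQ1 : (1 : ℝ) ≤ (Fintype.card F : ℝ) := by exact_mod_cast Fintype.card_pos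
  have hQ0 : (0 : ℝ) < (Fintype.card F : ℝ) := lt_of_lt_of_le one_pos hQ1
  have haq : ((univ.filter fun y : Fin m → F =>
        meval g y ≠ 0 ∧ meval δ' y = 0).card : ℝ) * (Fintype.card F : ℝ)
      = ((univ.filter fun y : Fin m → F => meval g y ≠ 0).card : ℝ) := by
    exact_mod_cast hcount'
  have haN : ((univ.filter fun y : Fin m → F =>
        meval g y ≠ 0 ∧ meval δ' y = 0).card : ℝ)
      ≤ ((univ.filter fun y : Fin m → F => meval δ' y = 0).card : ℝ) := by
    exact_mod_cast hsub
  set Q : ℝ := (Fintype.card F : ℝ)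
  set a : ℝ := ((univ.filter fun y : Fin m → F =>
    meval g y ≠ 0 ∧ meval δ' y = 0).card : ℝ)
  set c : ℝ := ((univ.filter fun y : Fin m → F => meval g y ≠ 0).card : ℝ)
  set N : ℝ := ((univ.filter fun y : Fin m → F => meval δ' y = 0).card : ℝ)
  have hLHS : 1 / Q * (1 - 1 / Q) ^ e = (Q - 1) ^ e / Q ^ (e + 1) := by
    have h1 : (1 : ℝ) - 1 / Q = (Q - 1) / Q := by field_simp
    rw [h1, div_pow, div_mul_div_comm, one_mul, pow_succ, mul_comm]
  rw [hLHS, div_le_div_iff₀ (by positivity) (by positivity)]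
  calc (Q - 1) ^ e * Q ^ m ≤ Q ^ e * c := hkey
    _ = Q ^ e * (a * Q) := by rw [haq]
    _ = Q ^ (e + 1) * a := by ring
    _ ≤ Q ^ (e + 1) * N := by
        apply mul_le_mul_of_nonneg_left haN (by positivity)
    _ = N * Q ^ (e + 1) := by ring
end
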